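/- arXiv:1803.09188 — 12 statements merged into one kernel-verified Lean document; each statement's English description precedes it below -/
import Mathlib

section
/- Let θ ∈ [0,1], λ ∈ ℝ, α > 0 and δT > 0 be such that |η| e^{-α δT} < 1, where η := (1 + i(1−θ)λδT)/(1 − iθλδT). Let s ∈ ℂ with |s| = e^{-α δT}, and let (ε_n^{(k)})_{n≥0, k≥0} be complex numbers satisfying ε_0^{(k)} = 0 for all k ≥ 0, ε_n^{(k)} = η s ε_{n−1}^{(k)} + (e^{iλδT} − η) s ε_{n−1}^{(k−1)} for all n ≥ 1 and k ≥ 1, and E := sup_{n≥0} |ε_n^{(0)}| < ∞. Then for every k ≥ 0, sup_{n≥0} |ε_n^{(k)}| ≤ ( |e^{iλδT} − η| e^{-αδT} / (1 − |η| e^{-αδT}) )^k · E. -/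
/-- Parareal exponential θ-scheme error recursion on a single Fourier mode:
uniform-in-time contraction of the parareal iterates. -/
theorem stmt_0
    (θ lam α δT : ℝ)
    (hθ : θ ∈ Set.Icc (0:ℝ) 1) (hα : 0 < α) (hδT : 0 < δT)
    (η : ℂ)
    (hη : η = (1 + Complex.I * ((1 - θ) * lam * δT)) / (1 - Complex.I * (θ * lam * δT)))
    (hstab : ‖η‖ * Real.exp (-α * δT) < 1)
    (s : ℂ) (hs : ‖s‖ = Real.exp (-α * δT))
    (ε : ℕ → ℕ → ℂ)
    (h0 : ∀ k, ε 0 k = 0)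
    (hrec : ∀ n k, 1 ≤ n → 1 ≤ k →
      ε n k = η * s * ε (n - 1) k
        + (Complex.exp (Complex.I * (lam * δT)) - η) * s * ε (n - 1) (k - 1))
    (E : ℝ) (hE : ∀ n, ‖ε n 0‖ ≤ E) :
    ∀ k n, ‖ε n k‖ ≤
      (‖Complex.exp (Complex.I * (lam * δT)) - η‖ * Real.exp (-α * δT)
        / (1 - ‖η‖ * Real.exp (-α * δT))) ^ k * E := by
  set r : ℝ := ‖η‖ * Real.exp (-α * δT) with hrdef
  set c : ℝ := ‖Complex.exp (Complex.I * (lam * δT)) - η‖ * Real.exp (-α * δT)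
    with hcdef
  have hr0 : 0 ≤ r := mul_nonneg (norm_nonneg _) (Real.exp_pos _).le
  have hc0 : 0 ≤ c := mul_nonneg (norm_nonneg _) (Real.exp_pos _).le
  have h1r : 0 < 1 - r := by linarith [hstab]
  have hE0 : 0 ≤ E := le_trans (by simp [h0 0]) (hE 0)
  have hq0 : 0 ≤ c / (1 - r) := div_nonneg hc0 h1r.le
  intro k
  induction k with
  | zero => intro n; simpa using hE n
  | succ k ih =>
    set M : ℝ := (c / (1 - r)) ^ k * E with hMdef
    have hM0 : 0 ≤ M := mul_nonneg (pow_nonneg hq0 k) hE0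
    intro n
    induction n with
    | zero =>
      simp only [h0, norm_zero]
      exact mul_nonneg (pow_nonneg hq0 _) hE0
    | succ n ihn =>
      have hrec' := hrec (n + 1) (k + 1) (Nat.le_add_left 1 n) (Nat.le_add_left 1 k)
      simp only [Nat.add_sub_cancel] at hrec'
      rw [hrec']
      calc ‖η * s * ε n (k + 1)
            + (Complex.exp (Complex.I * (lam * δT)) - η) * s * ε n (k + 1 - 1)‖
          ≤ r * ‖ε n (k + 1)‖ + c * ‖ε n k‖ := by
            refine (norm_add_le _ _).trans_eq ?_
            simp [norm_mul, hs, hrdef, hcdef]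
        _ ≤ r * ((c / (1 - r)) ^ (k + 1) * E) + c * M := by
            have h1 := ihn
            have h2 := ih n
            gcongr
        _ = (c / (1 - r)) ^ (k + 1) * E := by
            rw [pow_succ, hMdef]
            field_simp
            ring
end

section
/- Let θ ∈ [0,1], λ ∈ ℝ and δT > 0. If α > √(max(1/2 − θ, 0)) · |λ|, then 1 + (1−θ)²λ²δT² < (1 + θ²λ²δT²) e^{2αδT}; equivalently, |η| e^{-αδT} < 1, where η := (1 + i(1−θ)λδT)/(1 − iθλδT). -/
/-- Stability of the exponential θ-scheme: if α > √((1/2−θ)⁺)|λ| then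
1 + (1−θ)²λ²δT² < (1 + θ²λ²δT²) e^{2αδT}, equivalently |η| e^{-αδT} < 1. -/
theorem stmt_1 (θ lam α δT : ℝ) (hθ : θ ∈ Set.Icc (0:ℝ) 1) (hδT : 0 < δT)
    (hα : Real.sqrt (max (1/2 - θ) 0) * |lam| < α) :
    1 + (1 - θ)^2 * lam^2 * δT^2 < (1 + θ^2 * lam^2 * δT^2) * Real.exp (2*α*δT) ∧
    ‖(1 + Complex.I * ((1 - θ) * lam * δT)) / (1 - Complex.I * (θ * lam * δT))‖
      * Real.exp (-α * δT) < 1 := by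
  obtain ⟨hθ0, hθ1⟩ := hθ
  have hα0 : 0 < α :=
    lt_of_le_of_lt (mul_nonneg (Real.sqrt_nonneg _) (abs_nonneg _)) hα
  -- square the hypothesis
  have hsq : max (1/2 - θ) 0 * lam^2 < α^2 := by
    have h := mul_self_lt_mul_self (mul_nonneg (Real.sqrt_nonneg _) (abs_nonneg _)) hα
    have hs : Real.sqrt (max (1/2 - θ) 0) * Real.sqrt (max (1/2 - θ) 0) = max (1/2 - θ) 0 :=
      Real.mul_self_sqrt (le_max_right _ _)
    calc max (1/2 - θ) 0 * lam^2
        = (Real.sqrt (max (1/2 - θ) 0) * |lam|) * (Real.sqrt (max (1/2 - θ) 0) * |lam|) := by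
          rw [show (Real.sqrt (max (1/2 - θ) 0) * |lam|) * (Real.sqrt (max (1/2 - θ) 0) * |lam|)
              = (Real.sqrt (max (1/2 - θ) 0) * Real.sqrt (max (1/2 - θ) 0)) * (|lam| * |lam|) by ring,
            hs, abs_mul_abs_self]; ring
      _ < α * α := h
      _ = α^2 := (sq α).symm
  have hkey : (1 - 2*θ) * lam^2 < 2 * α^2 := by
    have : (1/2 - θ) * lam^2 ≤ max (1/2 - θ) 0 * lam^2 :=
      mul_le_mul_of_nonneg_right (le_max_left _ _) (sq_nonneg _)
    nlinarith
  -- exponential lower bound: 1 + y + y²/2 ≤ exp y for y ≥ 0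
  have hy : (0:ℝ) ≤ 2*α*δT := by positivity
  have hE : 1 + 2*α*δT + (2*α*δT)^2/2 ≤ Real.exp (2*α*δT) := by
    have := Real.sum_le_exp_of_nonneg hy 3
    simp [Finset.sum_range_succ, Nat.factorial] at this
    linarith
  have h1 : 1 + (1 - θ)^2 * lam^2 * δT^2 < (1 + θ^2 * lam^2 * δT^2) * Real.exp (2*α*δT) := by
    rcases eq_or_ne lam 0 with h | h
    · subst h
      have := Real.add_one_lt_exp (x := 2*α*δT) (by positivity)
      nlinarith
    · have hx : 0 < lam^2 * δT^2 := by positivity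
      have hkey2 : (1 - 2*θ) * (lam^2 * δT^2) < 2 * α^2 * δT^2 := by nlinarith
      nlinarith [sq_nonneg (θ * lam * δT), mul_nonneg (mul_nonneg (sq_nonneg (θ*lam*δT)) (le_of_lt hα0)) hδT.le,
        mul_nonneg (sq_nonneg (θ*lam*δT)) (sq_nonneg (α*δT))]
  refine ⟨h1, ?_⟩
  -- second part
  set a := (1 - θ) * lam * δT with ha
  set b := θ * lam * δT with hb
  have hca : (1:ℂ) + Complex.I * ((1 - (θ:ℂ)) * lam * δT) = 1 + Complex.I * (a:ℝ) := by
    rw [ha]; push_cast; ring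
  have hcb : (1:ℂ) - Complex.I * ((θ:ℂ) * lam * δT) = 1 - Complex.I * (b:ℝ) := by
    rw [hb]; push_cast; ring
  have habs1 : ‖1 + Complex.I * (a:ℝ)‖ = Real.sqrt (1 + a^2) := by
    rw [Complex.norm_def]
    congr 1
    simp [Complex.normSq_apply]
    ring
  have habs2 : ‖1 - Complex.I * (b:ℝ)‖ = Real.sqrt (1 + b^2) := by
    rw [Complex.norm_def]
    congr 1
    simp [Complex.normSq_apply]
    ring
  rw [norm_div, hca, hcb, habs1, habs2]
  have hb1 : (0:ℝ) < 1 + b^2 := by positivity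
  have hexp2 : Real.exp (2*α*δT) = Real.exp (α*δT) * Real.exp (α*δT) := by
    rw [← Real.exp_add]; ring_nf
  have hsqv : (Real.sqrt (1 + b^2) * Real.exp (α*δT))^2 = (1 + b^2) * Real.exp (2*α*δT) := by
    rw [mul_pow, Real.sq_sqrt hb1.le, hexp2]; ring
  have hlt : (1:ℝ) + a^2 < (1 + b^2) * Real.exp (2*α*δT) := by
    rw [ha, hb]; nlinarith [h1]
  have h2 : Real.sqrt (1 + a^2) < Real.sqrt (1 + b^2) * Real.exp (α*δT) := by
    have hlt' : (1:ℝ) + a^2 < (Real.sqrt (1 + b^2) * Real.exp (α*δT))^2 := by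
      rw [hsqv]; exact hlt
    have := Real.sqrt_lt_sqrt (by positivity) hlt'
    rwa [Real.sqrt_sq (by positivity)] at this
  rw [div_mul_eq_mul_div, div_lt_one (Real.sqrt_pos.mpr hb1)]
  have := mul_lt_mul_of_pos_right h2 (Real.exp_pos (-(α*δT)))
  rw [mul_assoc, ← Real.exp_add] at this
  simpa using this
end

section
/- Let θ ∈ [0,1]. Then θ ≥ 1/2 if and only if for all λ ∈ ℝ, all δT > 0 and all α > 0, one has 1 + (1−θ)²λ²δT² < (1 + θ²λ²δT²) e^{2αδT}, i.e. the stable function η̃ := (1 + (1−θ)²λ²δT²)/((1 + θ²λ²δT²) e^{2αδT}) satisfies η̃ < 1. -/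
/-- θ ≥ 1/2 iff the stable function of the exponential θ-scheme is < 1
for all λ ∈ ℝ, δT > 0 and α > 0. -/
theorem stmt_2 (θ : ℝ) (hθ : θ ∈ Set.Icc (0:ℝ) 1) :
    (1/2 ≤ θ) ↔ ∀ (lam δT α : ℝ), 0 < δT → 0 < α →
      1 + (1 - θ)^2 * lam^2 * δT^2 < (1 + θ^2 * lam^2 * δT^2) * Real.exp (2*α*δT) := by
  obtain ⟨h0, h1⟩ := hθ
  constructor
  · intro hhalf lam δT α hδT hα
    have hL : 1 + (1 - θ)^2 * lam^2 * δT^2 ≤ 1 + θ^2 * lam^2 * δT^2 := by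
      nlinarith [sq_nonneg lam, sq_nonneg δT, sq_nonneg (lam*δT)]
    have hexp : 1 < Real.exp (2*α*δT) := by
      have h : 0 < 2*α*δT := by positivity
      linarith [Real.add_one_le_exp (2*α*δT)]
    have hpos : 0 < 1 + θ^2 * lam^2 * δT^2 := by positivity
    calc 1 + (1 - θ)^2 * lam^2 * δT^2 ≤ 1 + θ^2 * lam^2 * δT^2 := hL
      _ = (1 + θ^2 * lam^2 * δT^2) * 1 := (mul_one _).symm
      _ < (1 + θ^2 * lam^2 * δT^2) * Real.exp (2*α*δT) :=
          mul_lt_mul_of_pos_left hexp hpos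
  · intro hall
    by_contra hlt
    push_neg at hlt
    have hc : θ^2 < (1 - θ)^2 := by nlinarith
    set r : ℝ := (1 + (1 - θ)^2) / (1 + θ^2) with hr
    have hd : (0:ℝ) < 1 + θ^2 := by positivity
    have hr1 : 1 < r := by
      rw [hr, lt_div_iff₀ hd]; nlinarith
    have hrpos : 0 < r := lt_trans one_pos hr1
    set α : ℝ := (1/2) * Real.log r with hαdef
    have hlogpos : 0 < Real.log r := Real.log_pos hr1
    have hαpos : 0 < α := by rw [hαdef]; positivity
    have key := hall 1 1 α one_pos hαpos
    have hexp : Real.exp (2*α*1) = r := by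
      rw [hαdef, show 2 * ((1/2) * Real.log r) * 1 = Real.log r by ring]
      exact Real.exp_log hrpos
    rw [hexp, hr] at key
    have h2 : (1 + θ^2 * 1^2 * 1^2) = 1 + θ^2 := by ring
    rw [h2, mul_div_cancel₀ _ (ne_of_gt hd)] at key
    nlinarith [key]
end

section
/- Let θ ∈ [0,1] and λ ∈ ℝ. Then there exists a constant C > 0 such that for all h ∈ (0,1], | e^{iλh} − (1 + i(1−θ)λh)/(1 − iθλh) | ≤ |θ − 1/2| λ² h² + C h³. In particular, for θ = 1/2 the left-hand side is O(h³). -/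
set_option maxHeartbeats 1000000 in
/-- Local accuracy of the amplification factor of the exponential θ-scheme:
|e^{iλh} − (1 + i(1−θ)λh)/(1 − iθλh)| ≤ |θ − 1/2| λ² h² + C h³ on (0,1]. -/
theorem stmt_3 (θ lam : ℝ) (hθ : θ ∈ Set.Icc (0:ℝ) 1) :
    ∃ C > 0, ∀ h : ℝ, 0 < h → h ≤ 1 →
      ‖Complex.exp (Complex.I * (lam * h)) -
        (1 + Complex.I * ((1 - θ) * lam * h)) / (1 - Complex.I * (θ * lam * h))‖
        ≤ |θ - 1/2| * lam^2 * h^2 + C * h^3 := by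
  obtain ⟨hθ0, hθ1⟩ := hθ
  refine ⟨|lam|^3 + (2 + |lam|) * |lam|^3 + 1, by positivity, ?_⟩
  intro h hh0 hh1
  set t : ℝ := lam * h with ht
  have habs_t : |t| = |lam| * h := by rw [ht, abs_mul, abs_of_pos hh0]
  set z : ℂ := Complex.I * (t : ℂ) with hz
  set D : ℂ := 1 - Complex.I * (θ * lam * h) with hD
  set N : ℂ := 1 + Complex.I * ((1 - θ) * lam * h) with hN
  have hzz : Complex.I * ((lam : ℂ) * (h : ℂ)) = z := by rw [hz]; push_cast [ht]; ring
  have hDre : D.re = 1 := by simp [hD]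
  have hD1 : (1:ℝ) ≤ ‖D‖ := by
    calc (1:ℝ) = |D.re| := by rw [hDre]; simp
    _ ≤ ‖D‖ := Complex.abs_re_le_norm D
  have hDne : D ≠ 0 := by
    intro h0; rw [h0] at hD1; simp at hD1; linarith
  have habsN : ‖N‖ ≤ 1 + (1 - θ) * |t| := by
    calc ‖N‖ ≤ ‖1‖ + ‖Complex.I * ((1 - θ) * lam * h)‖
        := norm_add_le _ _
    _ = 1 + |(1 - θ) * t| := by
        rw [norm_one, norm_mul, Complex.norm_I, one_mul]
        have : (1 - (θ:ℂ)) * lam * h = (((1 - θ) * t : ℝ) : ℂ) := by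
          push_cast [ht]; ring
        rw [this, Complex.norm_real, Real.norm_eq_abs]
    _ = 1 + (1 - θ) * |t| := by rw [abs_mul, abs_of_nonneg (by linarith : (0:ℝ) ≤ 1 - θ)]
  have habsD : ‖D‖ ≤ 1 + θ * |t| := by
    calc ‖D‖ ≤ ‖(1:ℂ)‖ + ‖Complex.I * (θ * lam * h)‖
        := by rw [hD, sub_eq_add_neg]
              refine (norm_add_le _ _).trans ?_
              rw [norm_neg]
    _ = 1 + θ * |t| := by
        rw [norm_one, norm_mul, Complex.norm_I, one_mul]
        have : ((θ:ℂ)) * lam * h = ((θ * t : ℝ) : ℂ) := by push_cast [ht]; ring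
        rw [this, Complex.norm_real, Real.norm_eq_abs, abs_mul, abs_of_nonneg hθ0]
  have hexpabs : ‖Complex.exp z‖ = 1 := by
    rw [Complex.norm_exp]
    simp [hz]
  have ht2 : t^2 = lam^2 * h^2 := by rw [ht]; ring
  have ht3 : |t|^3 = |lam|^3 * h^3 := by rw [habs_t]; ring
  rw [hzz]
  rcases le_or_gt (|t|) 1 with hcase | hcase
  · -- small case: Taylor expansion
    have habsz : ‖z‖ = |t| := by
      rw [hz, norm_mul, Complex.norm_I, one_mul, Complex.norm_real, Real.norm_eq_abs]
    have hR := Complex.exp_bound (x := z) (by rw [habsz]; exact hcase) (n := 3) (by norm_num)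
    have hsum : (∑ m ∈ Finset.range 3, z ^ m / m.factorial) = 1 + z + z^2/2 := by
      norm_num [Finset.sum_range_succ]
    rw [hsum] at hR
    have hRval : ‖Complex.exp z - (1 + z + z^2/2)‖ ≤ |t|^3 * (2/9) := by
      refine hR.trans (le_of_eq ?_)
      rw [habsz]
      norm_num [Nat.factorial]
    have hmain : Complex.exp z - N / D = (Complex.exp z * D - N) / D := by
      field_simp
    have hPD : (1 + z + z^2/2) * D - N
        = (((θ - 1/2) * t^2 : ℝ) : ℂ) + Complex.I * ((θ * t^3 / 2 : ℝ) : ℂ) := by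
      rw [hz, hD, hN, ht]
      have hI2 : Complex.I^2 = -1 := Complex.I_sq
      push_cast
      linear_combination ((lam:ℂ)^2 * (h:ℂ)^2 / 2 - (θ:ℂ) * (lam:ℂ)^2 * (h:ℂ)^2
        - Complex.I * (θ:ℂ) * (lam:ℂ)^3 * (h:ℂ)^3 / 2) * hI2
    have hPDabs : ‖(1 + z + z^2/2) * D - N‖ ≤ |θ - 1/2| * t^2 + θ * |t|^3 / 2 := by
      rw [hPD]
      refine (norm_add_le _ _).trans ?_
      rw [norm_mul, Complex.norm_I, one_mul, Complex.norm_real, Real.norm_eq_abs, Complex.norm_real, Real.norm_eq_abs]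
      have h1 : |(θ - 1/2) * t^2| = |θ - 1/2| * t^2 := by
        rw [abs_mul, abs_of_nonneg (sq_nonneg t)]
      have h2 : |θ * t^3 / 2| = θ * |t|^3 / 2 := by
        rw [abs_div, abs_mul, abs_of_nonneg hθ0, ← abs_pow]
        norm_num
      rw [h1, h2]
    have hDle2 : ‖D‖ ≤ 2 := by
      refine habsD.trans ?_
      nlinarith [abs_nonneg t]
    have hnum : ‖Complex.exp z * D - N‖
        ≤ |θ - 1/2| * t^2 + |t|^3 := by
      have hsplit : Complex.exp z * D - N
          = (Complex.exp z - (1 + z + z^2/2)) * D + ((1 + z + z^2/2) * D - N) := by ring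
      rw [hsplit]
      refine (norm_add_le _ _).trans ?_
      rw [norm_mul]
      have h1 : ‖Complex.exp z - (1 + z + z^2/2)‖ * ‖D‖
          ≤ (|t|^3 * (2/9)) * 2 :=
        mul_le_mul hRval hDle2 (norm_nonneg _) (by positivity)
      have h2 : θ * |t|^3 / 2 ≤ |t|^3 / 2 := by
        nlinarith [pow_nonneg (abs_nonneg t) 3]
      linarith [hPDabs, h1, h2, pow_nonneg (abs_nonneg t) 3]
    calc ‖Complex.exp z - N / D‖
        = ‖Complex.exp z * D - N‖ / ‖D‖ := by
          rw [hmain, norm_div]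
      _ ≤ ‖Complex.exp z * D - N‖ :=
          div_le_self (norm_nonneg _) hD1
      _ ≤ |θ - 1/2| * t^2 + |t|^3 := hnum
      _ ≤ |θ - 1/2| * lam^2 * h^2 + (|lam|^3 + (2 + |lam|) * |lam|^3 + 1) * h^3 := by
          rw [ht2, ht3]
          have hC : |lam|^3 ≤ |lam|^3 + (2 + |lam|) * |lam|^3 + 1 := by
            nlinarith [mul_nonneg (by positivity : (0:ℝ) ≤ 2 + |lam|)
              (pow_nonneg (abs_nonneg lam) 3)]
          have := mul_le_mul_of_nonneg_right hC (pow_nonneg hh0.le 3)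
          have he : |θ - 1/2| * (lam^2 * h^2) = |θ - 1/2| * lam^2 * h^2 := by ring
          linarith [he.le, he.ge]
  · -- large case: crude bound
    have ht1 : 1 < |lam| * h := habs_t ▸ hcase
    have hth3 : 1 ≤ |lam|^3 * h^3 := by
      have h1 : (1:ℝ)^3 ≤ (|lam| * h)^3 :=
        pow_le_pow_left₀ (by norm_num) ht1.le 3
      calc (1:ℝ) = 1^3 := by norm_num
        _ ≤ (|lam| * h)^3 := h1
        _ = |lam|^3 * h^3 := by ring
    have hlamt : |t| ≤ |lam| := by
      rw [habs_t]
      nlinarith [abs_nonneg lam]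
    have hlhs : ‖Complex.exp z - N / D‖ ≤ 2 + |lam| := by
      calc ‖Complex.exp z - N / D‖
          ≤ ‖Complex.exp z‖ + ‖N / D‖ := by
            exact (norm_sub_le _ _)
        _ = 1 + ‖N‖ / ‖D‖ := by rw [hexpabs, norm_div]
        _ ≤ 1 + ‖N‖ := by
            have := div_le_self (norm_nonneg N) hD1
            linarith
        _ ≤ 1 + (1 + (1 - θ) * |t|) := by linarith [habsN]
        _ ≤ 2 + |lam| := by linarith [mul_nonneg hθ0 (abs_nonneg t), hlamt]
    have h3p : (0:ℝ) ≤ h^3 := by positivity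
    calc ‖Complex.exp z - N / D‖ ≤ 2 + |lam| := hlhs
      _ ≤ (2 + |lam|) * (|lam|^3 * h^3) :=
          le_mul_of_one_le_right (by positivity) hth3
      _ ≤ |θ - 1/2| * lam^2 * h^2 + (|lam|^3 + (2 + |lam|) * |lam|^3 + 1) * h^3 := by
          have t1 : (0:ℝ) ≤ |θ - 1/2| * lam^2 * h^2 := by positivity
          have t2 : (2 + |lam|) * (|lam|^3 * h^3)
              ≤ (|lam|^3 + (2 + |lam|) * |lam|^3 + 1) * h^3 := by
            nlinarith [mul_nonneg (pow_nonneg (abs_nonneg lam) 3) h3p, h3p]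
          linarith
end

section
/- Let θ ∈ [0,1] and λ ∈ ℝ, and let α > √(max(1/2 − θ, 0)) · |λ|. Then there exists a constant C > 0 (depending on θ, λ, α) such that for all δT ∈ (0,1], with η := (1 + i(1−θ)λδT)/(1 − iθλδT), one has ( |e^{iλδT} − η| e^{-αδT} ) / ( 1 − |η| e^{-αδT} ) ≤ C ( |2θ − 1| δT + δT² ). In particular, the k-th power of the left-hand side is of order δT^k for θ ≠ 1/2 and of order δT^{2k} for θ = 1/2. -/
private lemma sq_abs_one_add_I_aux (r : ℝ) :
    (‖1 + Complex.I * r‖)^2 = 1 + r^2 := by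
  rw [Complex.sq_norm, Complex.normSq_apply]
  simp
  ring

private lemma sq_abs_one_sub_I_aux (r : ℝ) :
    (‖1 - Complex.I * r‖)^2 = 1 + r^2 := by
  have h : (1:ℂ) - Complex.I * r = 1 + Complex.I * ((-r : ℝ):ℂ) := by push_cast; ring
  rw [h, sq_abs_one_add_I_aux]; ring

private lemma case1_aux (u L a2 δT : ℝ) (hu : 0 ≤ u) (hL : 0 ≤ L) (ha : 0 ≤ a2) (hδ : 0 < δT) :
    u/2*(L^2*δT^2) + 3*(L^3*δT^3) ≤ (L^2 + L^3*(3+a2) + 1) * (u*δT^2 + δT^3) := by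
  nlinarith [mul_nonneg (mul_nonneg hu (sq_nonneg L)) (sq_nonneg δT),
    mul_nonneg hu (sq_nonneg δT),
    mul_nonneg (mul_nonneg hu (pow_nonneg hL 3)) (sq_nonneg δT),
    mul_nonneg (mul_nonneg (mul_nonneg hu ha) (pow_nonneg hL 3)) (sq_nonneg δT),
    mul_nonneg (mul_nonneg ha (pow_nonneg hL 3)) (pow_pos hδ 3).le,
    mul_nonneg (sq_nonneg L) (pow_pos hδ 3).le, (pow_pos hδ 3).le]
private lemma case2_aux (u L a2 δT : ℝ) (hu : 0 ≤ u) (hL : 0 ≤ L) (ha : 0 ≤ a2) (hδ : 0 < δT)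
    (hlx : 1 ≤ L^3 * δT^3) :
    2 + a2 ≤ (L^2 + L^3*(3+a2) + 1) * (u*δT^2 + δT^3) := by
  nlinarith [mul_nonneg (mul_nonneg hu (sq_nonneg L)) (sq_nonneg δT),
    mul_nonneg hu (sq_nonneg δT),
    mul_nonneg (mul_nonneg hu (pow_nonneg hL 3)) (sq_nonneg δT),
    mul_nonneg (mul_nonneg (mul_nonneg hu ha) (pow_nonneg hL 3)) (sq_nonneg δT),
    mul_nonneg ha (sub_nonneg.2 hlx), mul_nonneg (sq_nonneg L) (pow_pos hδ 3).le,
    (pow_pos hδ 3).le, sub_nonneg.2 hlx]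

set_option maxHeartbeats 1600000 in
/-- Bound on the per-iteration contraction factor of the parareal exponential
θ-scheme: |e^{iλδT} − η| e^{-αδT}/(1 − |η| e^{-αδT}) ≤ C(|2θ−1| δT + δT²). -/
theorem stmt_4 (θ lam α : ℝ) (hθ : θ ∈ Set.Icc (0:ℝ) 1)
    (hα : Real.sqrt (max (1/2 - θ) 0) * |lam| < α) :
    ∃ C > 0, ∀ δT : ℝ, 0 < δT → δT ≤ 1 →
      ‖Complex.exp (Complex.I * (lam * δT)) -
          (1 + Complex.I * ((1 - θ) * lam * δT)) / (1 - Complex.I * (θ * lam * δT))‖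
        * Real.exp (-α * δT)
        / (1 - ‖(1 + Complex.I * ((1 - θ) * lam * δT)) /
            (1 - Complex.I * (θ * lam * δT))‖ * Real.exp (-α * δT))
      ≤ C * (|2*θ - 1| * δT + δT^2) := by
  obtain ⟨hθ0, hθ1⟩ := hθ
  have hα0 : 0 < α := lt_of_le_of_lt (mul_nonneg (Real.sqrt_nonneg _) (abs_nonneg _)) hα
  set B : ℝ := max (1/2 - θ) 0 * lam^2 with hBdef
  clear_value B
  have hBnn : 0 ≤ B := by rw [hBdef]; exact mul_nonneg (le_max_right _ _) (sq_nonneg _)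
  have hBα : B < α^2 := by
    have h1 : (Real.sqrt (max (1/2-θ) 0) * |lam|)^2 < α^2 :=
      pow_lt_pow_left₀ hα (mul_nonneg (Real.sqrt_nonneg _) (abs_nonneg _)) two_ne_zero
    calc B = (Real.sqrt (max (1/2-θ) 0) * |lam|)^2 := by
            rw [hBdef, mul_pow, Real.sq_sqrt (le_max_right _ _), sq_abs]
      _ < α^2 := h1
  set c0 : ℝ := α / (1 + 2*α + 2*α^2) with hc0def
  clear_value c0
  have hden : (0:ℝ) < 1 + 2*α + 2*α^2 := by positivity
  have hc0 : 0 < c0 := by rw [hc0def]; exact div_pos hα0 hden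
  have hc0eq : c0 * (1 + 2*α + 2*α^2) = α := by rw [hc0def]; exact div_mul_cancel₀ _ (ne_of_gt hden)
  have hc0le : c0 ≤ 1 := by rw [hc0def, div_le_one hden]; nlinarith
  refine ⟨(lam^2 + |lam|^3*(3+α^2) + 1)/c0, by positivity, ?_⟩
  intro δT hδ hδ1
  set x : ℝ := lam * δT with hx
  clear_value x
  have e1 : Complex.I * ((lam:ℂ) * (δT:ℂ)) = Complex.I * ((x:ℝ):ℂ) := by
    rw [hx]; push_cast; ring
  have e2 : (1:ℂ) + Complex.I * ((1 - (θ:ℂ)) * lam * δT)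
      = 1 + Complex.I * (((1-θ)*x : ℝ):ℂ) := by rw [hx]; push_cast; ring
  have e3 : (1:ℂ) - Complex.I * ((θ:ℂ) * lam * δT)
      = 1 - Complex.I * ((θ*x : ℝ):ℂ) := by rw [hx]; push_cast; ring
  rw [e1, e2, e3]
  set z : ℂ := Complex.I * ((x:ℝ):ℂ) with hz
  set p : ℂ := 1 + Complex.I * (((1-θ)*x : ℝ):ℂ) with hp
  set q : ℂ := 1 - Complex.I * ((θ*x : ℝ):ℂ) with hq
  clear_value z p q
  have hsqp : (‖p‖)^2 = 1 + ((1-θ)*x)^2 := by rw [hp]; exact sq_abs_one_add_I_aux _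
  have hsqq : (‖q‖)^2 = 1 + (θ*x)^2 := by rw [hq]; exact sq_abs_one_sub_I_aux _
  have hq1 : 1 ≤ ‖q‖ := by
    nlinarith [norm_nonneg q, sq_nonneg (θ*x)]
  have hqpos : 0 < ‖q‖ := lt_of_lt_of_le one_pos hq1
  have hqne : q ≠ 0 := by
    intro h; rw [h] at hqpos; simp at hqpos
  have hd2 : δT^2 ≤ δT := by nlinarith
  have hd3 : δT^3 ≤ δT := by nlinarith
  -- amplification factor bound
  have hb2a2 : (1 + ((1-θ)*x)^2)/(1 + (θ*x)^2) ≤ 1 + 2*B*δT^2 := by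
    rw [div_le_iff₀ (by positivity)]
    have h3 : (1 - 2*θ)*lam^2 ≤ 2*B := by
      have h4 := le_max_left (1/2-θ) 0
      nlinarith [sq_nonneg lam]
    have hkey : ((1-θ)*x)^2 - (θ*x)^2 ≤ 2*B*δT^2 := by
      have h2 : ((1-θ)*x)^2 - (θ*x)^2 = (1 - 2*θ)*lam^2*δT^2 := by rw [hx]; ring
      nlinarith [sq_nonneg δT]
    nlinarith [hkey, sq_nonneg (θ*x),
      mul_nonneg (mul_nonneg hBnn (sq_nonneg δT)) (sq_nonneg (θ*x))]
  -- denominator bound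
  have hE : ‖p‖ / ‖q‖ * Real.exp (-α*δT) ≤ 1 - c0*δT := by
    set E := ‖p‖ / ‖q‖ * Real.exp (-α*δT) with hEdef
    clear_value E
    have hEnn : 0 ≤ E := by
      rw [hEdef]
      exact mul_nonneg (div_nonneg (norm_nonneg _) (norm_nonneg _)) (Real.exp_pos _).le
    have hexp2 : Real.exp (-α*δT)^2 = 1/Real.exp (2*α*δT) := by
      rw [sq, ← Real.exp_add, show (-α*δT + -α*δT) = -(2*α*δT) by ring,
        Real.exp_neg, one_div]
    have hq2 : 1 + 2*α*δT + 2*α^2*δT^2 ≤ Real.exp (2*α*δT) := by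
      have h := Real.quadratic_le_exp_of_nonneg (x := 2*α*δT) (by positivity)
      nlinarith
    have hE2 : E^2 ≤ (1 + 2*B*δT^2) / (1 + 2*α*δT + 2*α^2*δT^2) := by
      have h1 : E^2 = (1 + ((1-θ)*x)^2)/(1 + (θ*x)^2) * (1/Real.exp (2*α*δT)) := by
        rw [hEdef, mul_pow, div_pow, hsqp, hsqq, hexp2]
      rw [h1, div_eq_mul_one_div (1 + 2*B*δT^2)]
      apply mul_le_mul hb2a2 _ (by positivity) (by positivity)
      exact (one_div_le_one_div_of_le (by positivity) hq2)
    have hE2' : E^2 ≤ (1 - c0*δT)^2 := by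
      refine hE2.trans ?_
      rw [div_le_iff₀ (by positivity)]
      have hce : δT*(c0*(1+2*α+2*α^2)) = δT*α := by rw [hc0eq]
      nlinarith [hce,
        mul_nonneg (sub_nonneg.2 hBα.le) (sq_nonneg δT),
        mul_nonneg (mul_nonneg hc0.le hα0.le) (sub_nonneg.2 hd2),
        mul_nonneg (mul_nonneg hc0.le (sq_nonneg α)) (sub_nonneg.2 hd3),
        mul_nonneg (sq_nonneg (c0*δT)) (by positivity : (0:ℝ) ≤ 1 + 2*α*δT + 2*α^2*δT^2)]
    have h1c : 0 ≤ 1 - c0*δT := by nlinarith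
    calc E = Real.sqrt (E^2) := (Real.sqrt_sq hEnn).symm
      _ ≤ Real.sqrt ((1 - c0*δT)^2) := Real.sqrt_le_sqrt hE2'
      _ = 1 - c0*δT := Real.sqrt_sq h1c
  have hcdpos : 0 < c0 * δT := mul_pos hc0 hδ
  have hD : c0*δT ≤ 1 - ‖p/q‖ * Real.exp (-α*δT) := by
    rw [norm_div]
    nlinarith [hE]
  -- numerator bounds
  have habsz : ‖z‖ = |x| := by
    rw [hz, norm_mul, Complex.norm_I, Complex.norm_real, Real.norm_eq_abs, one_mul]
  have hexpz : ‖Complex.exp z‖ = 1 := by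
    rw [hz, Complex.norm_exp]
    simp
  have hNf_le : ‖Complex.exp z - p/q‖ * Real.exp (-α*δT)
      ≤ ‖Complex.exp z - p/q‖ := by
    have h1 : Real.exp (-α*δT) ≤ 1 := Real.exp_le_one_iff.2 (by nlinarith)
    nlinarith [norm_nonneg (Complex.exp z - p/q), Real.exp_pos (-α*δT)]
  have hstep : ∀ N : ℝ, ‖Complex.exp z - p/q‖ ≤ N →
      N ≤ (lam^2 + |lam|^3*(3+α^2) + 1) * (|2*θ-1| * δT^2 + δT^3) →
      ‖Complex.exp z - p/q‖ * Real.exp (-α*δT)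
        / (1 - ‖p/q‖ * Real.exp (-α*δT))
      ≤ (lam^2 + |lam|^3*(3+α^2) + 1)/c0 * (|2*θ-1| * δT + δT^2) := by
    intro N hN1 hN2
    have hNnn : 0 ≤ N := le_trans (norm_nonneg _) hN1
    have h1 : ‖Complex.exp z - p/q‖ * Real.exp (-α*δT)
        / (1 - ‖p/q‖ * Real.exp (-α*δT)) ≤ N / (c0*δT) :=
      div_le_div₀ hNnn (le_trans hNf_le hN1) hcdpos hD
    refine h1.trans ?_
    rw [div_le_iff₀ hcdpos]
    calc N ≤ (lam^2 + |lam|^3*(3+α^2) + 1) * (|2*θ-1| * δT^2 + δT^3) := hN2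
      _ = (lam^2 + |lam|^3*(3+α^2) + 1)/c0 * (|2*θ-1| * δT + δT^2) * (c0*δT) := by
          field_simp
  have habsx : |x| = |lam| * δT := by rw [hx, abs_mul, abs_of_pos hδ]
  by_cases hxs : |x| ≤ 1
  · -- small case
    have hexp3 : ‖Complex.exp z - (1 + z + z^2/2)‖ ≤ |x|^3 := by
      have h := Complex.exp_bound (x := z) (by rw [habsz]; exact hxs) (n := 3) (by norm_num)
      have hs : ∑ m ∈ Finset.range 3, z ^ m / m.factorial = 1 + z + z^2/2 := by
        simp [Finset.sum_range_succ]
      rw [hs, habsz] at h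
      norm_num [Nat.factorial] at h
      nlinarith [h, pow_nonneg (abs_nonneg x) 3]
    have hpoly : (1 + z + z^2/2) * q - p
        = (((θ-1/2)*x^2 : ℝ):ℂ) + Complex.I * ((θ*x^3/2 : ℝ):ℂ) := by
      rw [hz, hp, hq]
      push_cast
      linear_combination ((x:ℂ)^2/2 - (θ:ℂ)*x^2 - Complex.I*θ*x^3/2) * Complex.I_sq
    have habsq2 : ‖q‖ ≤ 2 := by
      have hθx : (θ*x)^2 ≤ 1 := by
        have : |θ*x| ≤ 1 := by
          rw [abs_mul]
          calc |θ| * |x| ≤ 1 * 1 := by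
                apply mul_le_mul _ hxs (abs_nonneg x) zero_le_one
                rw [abs_of_nonneg hθ0]; exact hθ1
            _ = 1 := by ring
        nlinarith [abs_nonneg (θ*x), sq_abs (θ*x)]
      nlinarith [norm_nonneg q]
    have hNbound : ‖Complex.exp z - p/q‖
        ≤ |2*θ-1|/2 * x^2 + 3*|x|^3 := by
      have hkey : Complex.exp z - p/q = (Complex.exp z * q - p)/q := by
        field_simp
      have hle1 : ‖Complex.exp z - p/q‖ ≤ ‖Complex.exp z * q - p‖ := by
        rw [hkey, norm_div]
        exact div_le_self (norm_nonneg _) hq1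
      refine hle1.trans ?_
      have hsplit : Complex.exp z * q - p
          = (Complex.exp z - (1 + z + z^2/2)) * q + ((1 + z + z^2/2)*q - p) := by ring
      rw [hsplit]
      refine (norm_add_le _ _).trans ?_
      have hterm1 : ‖(Complex.exp z - (1 + z + z^2/2)) * q‖ ≤ |x|^3 * 2 := by
        rw [norm_mul]
        exact mul_le_mul hexp3 habsq2 (norm_nonneg q) (by positivity)
      have hterm2 : ‖(1 + z + z^2/2)*q - p‖
          ≤ |2*θ-1|/2 * x^2 + θ*|x|^3/2 := by
        rw [hpoly]
        refine (norm_add_le _ _).trans ?_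
        rw [norm_mul, Complex.norm_I, Complex.norm_real, Complex.norm_real, Real.norm_eq_abs, Real.norm_eq_abs, one_mul]
        have e4 : |(θ - 1/2)*x^2| = |2*θ-1|/2 * x^2 := by
          rw [abs_mul, abs_pow, sq_abs,
            show (2*θ-1) = 2*(θ-1/2) by ring, abs_mul]
          norm_num
        have e5 : |θ*x^3/2| ≤ θ*|x|^3/2 := by
          rw [abs_div, abs_mul, abs_pow, abs_of_nonneg hθ0]
          norm_num
        rw [e4]
        nlinarith
      nlinarith [pow_nonneg (abs_nonneg x) 3]
    refine hstep (|2*θ-1|/2 * x^2 + 3*|x|^3) hNbound ?_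
    have g1 : x^2 = |lam|^2*δT^2 := by rw [hx, mul_pow, sq_abs]
    have g2 : |x|^3 = |lam|^3*δT^3 := by rw [habsx]; ring
    have g3 : lam^2 = |lam|^2 := (sq_abs lam).symm
    rw [g1, g2, g3]
    exact case1_aux _ _ _ _ (abs_nonneg _) (abs_nonneg _) (sq_nonneg _) hδ
  · -- large case
    push_neg at hxs
    have hη : ‖p/q‖ ≤ 1 + α^2 := by
      have h2 : (‖p/q‖)^2 ≤ (1+α^2)^2 := by
        rw [norm_div, div_pow, hsqp, hsqq]
        have hd21 : δT^2 ≤ 1 := le_trans hd2 hδ1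
        nlinarith [hb2a2, mul_nonneg hBnn (sub_nonneg.2 hd21), hBα, hBnn, sq_nonneg (α^2), sq_nonneg α]
      have h3 : 0 ≤ ‖p/q‖ := norm_nonneg _
      nlinarith [sq_nonneg α]
    have hNbound : ‖Complex.exp z - p/q‖ ≤ 2 + α^2 := by
      have h : ‖Complex.exp z - p/q‖
          ≤ ‖Complex.exp z‖ + ‖p/q‖ := by
        simpa using norm_sub_le (Complex.exp z) (p/q)
      rw [hexpz] at h
      nlinarith
    refine hstep (2 + α^2) hNbound ?_
    have hlx : 1 ≤ |lam|^3 * δT^3 := by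
      have h1 : 1 < |lam| * δT := by rwa [habsx] at hxs
      calc (1:ℝ) = 1^3 := by norm_num
        _ ≤ (|lam| * δT)^3 := by
            apply pow_le_pow_left₀ zero_le_one h1.le
        _ = |lam|^3*δT^3 := by ring
    rw [show lam^2 = |lam|^2 from (sq_abs lam).symm]
    exact case2_aux _ _ _ _ (abs_nonneg _) (abs_nonneg _) (sq_nonneg _) hδ hlx
end

section
/- Let γ₁ ∈ [0,1) and γ₂ ≥ 0. Let ε : ℕ × ℕ → [0,∞) satisfy ε(0,k) = 0 for all k ≥ 0, ε(n,k) ≤ γ₁ ε(n−1,k) + γ₂ ε(n−1,k−1) for all n ≥ 1 and k ≥ 1, and E₀ := sup_{n≥0} ε(n,0) < ∞. Then for every k ≥ 0, sup_{n≥0} ε(n,k) ≤ ( γ₂/(1 − γ₁) )^k · E₀. -/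
/-- Abstract parareal error recursion with contractive coarse propagator:
time-uniform convergence with rate (γ₂/(1−γ₁))^k. -/
theorem stmt_5 (γ₁ γ₂ : ℝ) (h10 : 0 ≤ γ₁) (h11 : γ₁ < 1) (h2 : 0 ≤ γ₂)
    (ε : ℕ → ℕ → ℝ) (hpos : ∀ n k, 0 ≤ ε n k)
    (h0 : ∀ k, ε 0 k = 0)
    (hrec : ∀ n k, 1 ≤ n → 1 ≤ k → ε n k ≤ γ₁ * ε (n - 1) k + γ₂ * ε (n - 1) (k - 1))
    (E₀ : ℝ) (hE : ∀ n, ε n 0 ≤ E₀) :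
    ∀ k n, ε n k ≤ (γ₂ / (1 - γ₁))^k * E₀ := by
  have h1 : 0 < 1 - γ₁ := by linarith
  intro k
  induction k with
  | zero => intro n; simpa using hE n
  | succ k ih =>
    set C := (γ₂ / (1 - γ₁))^k * E₀ with hC
    have hC0 : 0 ≤ C := (h0 k) ▸ ih 0
    have hB : (γ₂ / (1 - γ₁))^(k+1) * E₀ = γ₂ / (1 - γ₁) * C := by
      rw [hC, pow_succ]; ring
    intro n
    induction n with
    | zero =>
      have hE0 : (0:ℝ) ≤ E₀ := (h0 0) ▸ hE 0
      rw [h0]; positivity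
    | succ n ihn =>
      have hr := hrec (n+1) (k+1) (Nat.le_add_left 1 n) (Nat.le_add_left 1 k)
      simp only [Nat.add_sub_cancel] at hr
      have h1' : γ₁ * ε n (k+1) ≤ γ₁ * ((γ₂ / (1 - γ₁))^(k+1) * E₀) :=
        mul_le_mul_of_nonneg_left ihn h10
      have h2' : γ₂ * ε n k ≤ γ₂ * C := mul_le_mul_of_nonneg_left (ih n) h2
      rw [hB] at h1' ⊢
      have : γ₁ * (γ₂ / (1 - γ₁) * C) + γ₂ * C = γ₂ / (1 - γ₁) * C := by
        field_simp; ring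
      linarith
end

section
/- Let γ₁, γ₂ ≥ 0 and N ∈ ℕ. Let ε : {0,…,N} × ℕ → [0,∞) satisfy ε(0,k) = 0 for all k ≥ 0 and ε(n,k) ≤ γ₁ ε(n−1,k) + γ₂ ε(n−1,k−1) for all 1 ≤ n ≤ N and k ≥ 1. Then for all k ≥ 1 and 0 ≤ n ≤ N, ε(n,k) ≤ γ₂^k · (max(1,γ₁))^n · (n^k / k!) · max_{0≤j≤n} ε(j,0). -/
lemma stmt_6_aux (n : ℕ) : ∀ k, 1 ≤ k → n^k + k * n^(k-1) ≤ (n+1)^k := by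
  intro k hk
  induction k, hk using Nat.le_induction with
  | base => simp
  | succ m hm ih =>
    obtain ⟨j, rfl⟩ : ∃ j, m = j + 1 := ⟨m - 1, by omega⟩
    simp only [Nat.add_sub_cancel] at ih ⊢
    have e1 : n^(j+1) = n^j * n := pow_succ n j
    have e2 : n^(j+2) = n^(j+1) * n := pow_succ n (j+1)
    have e3 : (n+1)^(j+2) = (n+1)^(j+1) * (n+1) := pow_succ (n+1) (j+1)
    nlinarith [ih, Nat.zero_le (n^j), Nat.zero_le (n^(j+1))]

/-- Abstract parareal error recursion on a bounded interval with a possibly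
non-contractive coarse propagator: combinatorial convergence bound. -/
theorem stmt_6 (γ₁ γ₂ : ℝ) (h1 : 0 ≤ γ₁) (h2 : 0 ≤ γ₂) (N : ℕ)
    (ε : ℕ → ℕ → ℝ) (hpos : ∀ n k, 0 ≤ ε n k)
    (h0 : ∀ k, ε 0 k = 0)
    (hrec : ∀ n k, 1 ≤ n → n ≤ N → 1 ≤ k →
      ε n k ≤ γ₁ * ε (n - 1) k + γ₂ * ε (n - 1) (k - 1)) :
    ∀ k n, 1 ≤ k → n ≤ N →
      ε n k ≤ γ₂^k * (max 1 γ₁)^n * ((n : ℝ)^k / (Nat.factorial k)) *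
        ((Finset.Icc 0 n).sup' (Finset.nonempty_Icc.mpr (Nat.zero_le n)) (fun j => ε j 0)) := by
  set g := max 1 γ₁ with hgdef
  have hg1 : (1:ℝ) ≤ g := le_max_left _ _
  have hγg : γ₁ ≤ g := le_max_right _ _
  have hg0 : (0:ℝ) ≤ g := le_trans zero_le_one hg1
  set M : ℕ → ℝ := fun n =>
    (Finset.Icc 0 n).sup' (Finset.nonempty_Icc.mpr (Nat.zero_le n)) (fun j => ε j 0) with hMdef
  have hMmem : ∀ n j, j ≤ n → ε j 0 ≤ M n := by
    intro n j hj
    exact Finset.le_sup' (fun j => ε j 0) (by simp [hj])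
  have hM0 : ∀ n, 0 ≤ M n := fun n => le_trans (hpos 0 0) (hMmem n 0 (Nat.zero_le n))
  have hMmono : ∀ n, M n ≤ M (n+1) := by
    intro n
    apply Finset.sup'_le
    intro j hj
    exact hMmem (n+1) j (by simp at hj; omega)
  have key : ∀ n, n ≤ N → ∀ k,
      ε n k ≤ γ₂^k * g^n * ((n:ℝ)^k / (Nat.factorial k)) * M n := by
    intro n
    induction n with
    | zero =>
      intro _ k
      rw [h0 k]
      apply mul_nonneg _ (hM0 0)
      positivity
    | succ n ih =>
      intro hn1 k
      have hn : n ≤ N := by omega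
      match k with
      | 0 =>
        have hb : ε (n+1) 0 ≤ M (n+1) := hMmem (n+1) (n+1) le_rfl
        have hgp : (1:ℝ) ≤ g^(n+1) := one_le_pow₀ hg1
        simp only [pow_zero, Nat.factorial_zero, Nat.cast_one, one_mul, div_one]
        nlinarith [hM0 (n+1)]
      | m + 1 =>
        have hF : (0:ℝ) < (Nat.factorial (m+1) : ℝ) := by
          exact_mod_cast Nat.factorial_pos (m+1)
        have hFm : (0:ℝ) < (Nat.factorial m : ℝ) := by
          exact_mod_cast Nat.factorial_pos m
        have hFe : (Nat.factorial (m+1) : ℝ) = (m+1) * (Nat.factorial m : ℝ) := by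
          rw [Nat.factorial_succ]; push_cast; ring
        have step1 : ε (n+1) (m+1) ≤ γ₁ * ε n (m+1) + γ₂ * ε n m := by
          have := hrec (n+1) (m+1) (by omega) hn1 (by omega)
          simpa using this
        have ihA := ih hn (m+1)
        have ihB := ih hn m
        have binom : ((n:ℝ))^(m+1) + ((m:ℝ)+1) * (n:ℝ)^m ≤ ((n:ℝ)+1)^(m+1) := by
          have h := stmt_6_aux n (m+1) (by omega)
          simp only [Nat.add_sub_cancel] at h
          have : ((n^(m+1) + (m+1) * n^m : ℕ) : ℝ) ≤ (((n+1)^(m+1) : ℕ) : ℝ) := by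
            exact_mod_cast h
          push_cast at this
          linarith
        calc ε (n+1) (m+1) ≤ γ₁ * ε n (m+1) + γ₂ * ε n m := step1
          _ ≤ g * (γ₂^(m+1) * g^n * ((n:ℝ)^(m+1) / (Nat.factorial (m+1))) * M n)
              + γ₂ * (γ₂^m * g^n * ((n:ℝ)^m / (Nat.factorial m)) * M n) := by
            apply add_le_add
            · exact mul_le_mul hγg ihA (hpos n (m+1)) hg0
            · exact mul_le_mul_of_nonneg_left ihB h2
          _ = γ₂^(m+1) * M n * (g^(n+1) * (n:ℝ)^(m+1) + g^n * (((m:ℝ)+1) * (n:ℝ)^m))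
              / (Nat.factorial (m+1)) := by
            rw [hFe]
            field_simp
            ring
          _ ≤ γ₂^(m+1) * M n * (g^(n+1) * (n:ℝ)^(m+1) + g^(n+1) * (((m:ℝ)+1) * (n:ℝ)^m))
              / (Nat.factorial (m+1)) := by
            gcongr <;>
              first
                | exact mul_nonneg (pow_nonneg h2 _) (hM0 n)
                | exact hg1
                | exact Nat.le_succ n
                | positivity
          _ = γ₂^(m+1) * M n * g^(n+1) * (((n:ℝ))^(m+1) + ((m:ℝ)+1) * (n:ℝ)^m)
              / (Nat.factorial (m+1)) := by ring
          _ ≤ γ₂^(m+1) * M n * g^(n+1) * ((n:ℝ)+1)^(m+1) / (Nat.factorial (m+1)) := by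
            gcongr <;>
              first
                | exact mul_nonneg (mul_nonneg (pow_nonneg h2 _) (hM0 n)) (pow_nonneg hg0 _)
                | exact binom
                | positivity
          _ ≤ γ₂^(m+1) * M (n+1) * g^(n+1) * ((n:ℝ)+1)^(m+1) / (Nat.factorial (m+1)) := by
            gcongr <;> first | exact hMmono n | positivity
          _ = γ₂^(m+1) * g^(n+1) * (((n+1:ℕ):ℝ)^(m+1) / (Nat.factorial (m+1))) * M (n+1) := by
            push_cast
            ring
  intro k n _ hn
  exact key n hn k
end

section
/- Let L > 0, δT > 0, α ≥ 0 and θ ∈ [0,1]. Set γ₁ := (1 + (1−θ) L δT) e^{-α δT}, γ₂ := L δT (1 + e^{L δT}) e^{-α δT}, and f(θ) := γ₁ + γ₂ = (1 + (2−θ) L δT + L δT e^{L δT}) e^{-α δT}. Assume f(θ) < 1. If ε : ℕ × ℕ → [0,∞) satisfies ε(0,k) = 0 for all k, ε(n,k) ≤ γ₁ ε(n−1,k) + γ₂ ε(n−1,k−1) for all n,k ≥ 1, and sup_n ε(n,0) < ∞, then for every k ≥ 0, sup_{n≥0} ε(n,k) ≤ f(θ)^k · sup_{n≥0} ε(n,0).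 -/
/-- Parareal exponential θ-scheme for the nonlinear damped stochastic Schrödinger
equation: time-uniform convergence with rate f(θ)^k whenever f(θ) < 1. -/
theorem stmt_14 (L δT α θ : ℝ) (hL : 0 < L) (hδT : 0 < δT) (hα : 0 ≤ α)
    (hθ : θ ∈ Set.Icc (0:ℝ) 1)
    (hf : (1 + (2 - θ) * L * δT + L * δT * Real.exp (L * δT)) * Real.exp (-α * δT) < 1)
    (ε : ℕ → ℕ → ℝ) (hpos : ∀ n k, 0 ≤ ε n k)
    (h0 : ∀ k, ε 0 k = 0)
    (hrec : ∀ n k, 1 ≤ n → 1 ≤ k →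
      ε n k ≤ (1 + (1 - θ) * L * δT) * Real.exp (-α * δT) * ε (n - 1) k
        + L * δT * (1 + Real.exp (L * δT)) * Real.exp (-α * δT) * ε (n - 1) (k - 1))
    (E : ℝ) (hE : ∀ n, ε n 0 ≤ E) :
    ∀ k n, ε n k ≤
      ((1 + (2 - θ) * L * δT + L * δT * Real.exp (L * δT)) * Real.exp (-α * δT))^k * E := by
  set γ₁ : ℝ := (1 + (1 - θ) * L * δT) * Real.exp (-α * δT) with hγ₁
  set γ₂ : ℝ := L * δT * (1 + Real.exp (L * δT)) * Real.exp (-α * δT) with hγ₂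
  set f : ℝ := (1 + (2 - θ) * L * δT + L * δT * Real.exp (L * δT)) * Real.exp (-α * δT)
    with hfdef
  have hexp : 0 < Real.exp (-α * δT) := Real.exp_pos _
  have hexp2 : 0 < Real.exp (L * δT) := Real.exp_pos _
  have hθ1 : θ ≤ 1 := hθ.2
  have hγ₁0 : 0 ≤ γ₁ := by
    apply mul_nonneg _ hexp.le
    nlinarith [mul_pos hL hδT, mul_nonneg (sub_nonneg.2 hθ1) (mul_pos hL hδT).le]
  have hγ₂0 : 0 ≤ γ₂ := by
    apply mul_nonneg _ hexp.le
    nlinarith [mul_pos hL hδT]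
  have hsum : γ₁ + γ₂ = f := by
    rw [hγ₁, hγ₂, hfdef]; ring
  have hf0 : 0 ≤ f := by rw [← hsum]; positivity
  have hE0 : 0 ≤ E := (hpos 0 0).trans (hE 0)
  intro k
  induction k with
  | zero => intro n; simpa using hE n
  | succ k ih =>
    intro n
    induction n with
    | zero =>
      rw [h0]
      positivity
    | succ n ihn =>
      have hr := hrec (n + 1) (k + 1) (Nat.le_add_left 1 n) (Nat.le_add_left 1 k)
      simp only [Nat.add_sub_cancel] at hr
      have hstep : f ^ (k + 1) * E ≤ f ^ k * E := by
        rw [pow_succ]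
        nlinarith [pow_nonneg hf0 k, mul_nonneg (pow_nonneg hf0 k) hE0]
      calc ε (n + 1) (k + 1) ≤ γ₁ * ε n (k + 1) + γ₂ * ε n k := hr
        _ ≤ γ₁ * (f ^ (k + 1) * E) + γ₂ * (f ^ k * E) := by
            have h1 := ihn
            have h2 := ih n
            gcongr
        _ ≤ γ₁ * (f ^ k * E) + γ₂ * (f ^ k * E) := by gcongr
        _ = f ^ (k + 1) * E := by rw [← hsum]; ring
end

section
/- Let L > 0, α ≥ 0, δT ∈ (0,1], N ∈ ℕ, and T := N δT. Set γ₁ := (1 + L δT) e^{-α δT} and γ₂ := (2 + L δT e^{L δT}) L δT e^{-α δT}. Let ε : {0,…,N} × ℕ → [0,∞) satisfy ε(0,k) = 0 for all k and ε(n,k) ≤ γ₁ ε(n−1,k) + γ₂ ε(n−1,k−1) for all 1 ≤ n ≤ N and k ≥ 1. Then with C := (2 + L e^{L}) L, for every k ≥ 1, max_{0≤n≤N} ε(n,k) ≤ (e^{-α δT})^k · ((C T)^k / k!) · max( e^{(L−α)T}, 1 ) · max_{0≤n≤N} ε(n,0). -/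
set_option maxHeartbeats 1000000 in
/-- Parareal algorithm with exponential Euler coarse propagator for the nonlinear
damped stochastic Schrödinger equation: convergence bound on a bounded interval. -/
theorem stmt_15 (L α δT : ℝ) (hL : 0 < L) (hα : 0 ≤ α) (hδT0 : 0 < δT) (hδT1 : δT ≤ 1)
    (N : ℕ)
    (ε : ℕ → ℕ → ℝ) (hpos : ∀ n k, 0 ≤ ε n k)
    (h0 : ∀ k, ε 0 k = 0)
    (hrec : ∀ n k, 1 ≤ n → n ≤ N → 1 ≤ k →
      ε n k ≤ (1 + L * δT) * Real.exp (-α * δT) * ε (n - 1) k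
        + (2 + L * δT * Real.exp (L * δT)) * L * δT * Real.exp (-α * δT) * ε (n - 1) (k - 1)) :
    ∀ k, 1 ≤ k → ∀ n ≤ N,
      ε n k ≤ (Real.exp (-α * δT))^k
        * (((2 + L * Real.exp L) * L * ((N : ℝ) * δT))^k / (Nat.factorial k))
        * max (Real.exp ((L - α) * ((N : ℝ) * δT))) 1
        * ((Finset.Icc 0 N).sup' (Finset.nonempty_Icc.mpr (Nat.zero_le N)) (fun j => ε j 0)) := by
  intro k hk n hn
  set γ₁ := (1 + L * δT) * Real.exp (-α * δT) with hγ1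
  set γ₂ := (2 + L * δT * Real.exp (L * δT)) * L * δT * Real.exp (-α * δT) with hγ2
  set g := max γ₁ 1 with hgdef
  set M := (Finset.Icc 0 N).sup' (Finset.nonempty_Icc.mpr (Nat.zero_le N)) (fun j => ε j 0)
    with hMdef
  have hεM : ∀ m ≤ N, ε m 0 ≤ M := by
    intro m hm
    exact Finset.le_sup' (fun j => ε j 0) (by simp [hm])
  have hM0 : 0 ≤ M := le_trans (hpos 0 0) (hεM 0 (Nat.zero_le N))
  have hγ1nn : 0 ≤ γ₁ := by
    apply mul_nonneg _ (Real.exp_nonneg _)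
    nlinarith
  have hX : 0 ≤ 2 + L * δT * Real.exp (L * δT) := by
    nlinarith [mul_pos hL hδT0, Real.exp_pos (L * δT)]
  have hγ2nn : 0 ≤ γ₂ :=
    mul_nonneg (mul_nonneg (mul_nonneg hX hL.le) hδT0.le) (Real.exp_nonneg _)
  have hg1 : (1:ℝ) ≤ g := le_max_right _ _
  have hg0 : 0 ≤ g := le_trans zero_le_one hg1
  have hγ1g : γ₁ ≤ g := le_max_left _ _
  -- key induction
  have key : ∀ m ≤ N, ∀ j, ε m j ≤ γ₂ ^ j * (m.choose j : ℝ) * g ^ (m - j) * M := by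
    intro m
    induction m with
    | zero =>
      intro _ j
      rw [h0]
      have : (0:ℝ) ≤ γ₂ ^ j * ((Nat.choose 0 j : ℕ) : ℝ) * g ^ (0 - j) * M := by positivity
      simpa using this
    | succ n ih =>
      intro hn1 j
      have hn' : n ≤ N := le_of_lt (Nat.lt_of_succ_le hn1)
      cases j with
      | zero =>
        simp only [pow_zero, Nat.choose_zero_right, Nat.cast_one, one_mul, mul_one,
          Nat.sub_zero]
        calc ε (n+1) 0 ≤ M := hεM _ hn1
          _ ≤ g ^ (n+1) * M := le_mul_of_one_le_left hM0 (one_le_pow₀ hg1)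
      | succ j =>
        have h1 := hrec (n+1) (j+1) (Nat.succ_le_succ (Nat.zero_le n)) hn1
          (Nat.succ_le_succ (Nat.zero_le j))
        simp only [Nat.add_sub_cancel] at h1
        have ih1 := ih hn' (j+1)
        have ih2 := ih hn' j
        have hterm2 : γ₂ * ε n j ≤ γ₂ ^ (j+1) * (n.choose j : ℝ) * g ^ (n - j) * M := by
          calc γ₂ * ε n j ≤ γ₂ * (γ₂ ^ j * (n.choose j : ℝ) * g ^ (n - j) * M) :=
                mul_le_mul_of_nonneg_left ih2 hγ2nn
            _ = γ₂ ^ (j+1) * (n.choose j : ℝ) * g ^ (n - j) * M := by ring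
        have hterm1 : γ₁ * ε n (j+1) ≤ γ₂ ^ (j+1) * (n.choose (j+1) : ℝ) * g ^ (n - j) * M := by
          rcases le_or_gt (j+1) n with hjn | hjn
          · have hsub : n - j = (n - (j+1)) + 1 := by omega
            calc γ₁ * ε n (j+1)
                ≤ γ₁ * (γ₂ ^ (j+1) * (n.choose (j+1) : ℝ) * g ^ (n - (j+1)) * M) :=
                  mul_le_mul_of_nonneg_left ih1 hγ1nn
              _ ≤ g * (γ₂ ^ (j+1) * (n.choose (j+1) : ℝ) * g ^ (n - (j+1)) * M) := by
                  apply mul_le_mul_of_nonneg_right hγ1g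
                  positivity
              _ = γ₂ ^ (j+1) * (n.choose (j+1) : ℝ) * g ^ ((n - (j+1)) + 1) * M := by
                  rw [pow_succ]; ring
              _ = γ₂ ^ (j+1) * (n.choose (j+1) : ℝ) * g ^ (n - j) * M := by rw [hsub]
          · have hc : n.choose (j+1) = 0 := Nat.choose_eq_zero_of_lt hjn
            have hz : γ₁ * ε n (j+1) ≤ 0 := by
              have := mul_le_mul_of_nonneg_left ih1 hγ1nn
              simpa [hc] using this
            calc γ₁ * ε n (j+1) ≤ 0 := hz
              _ ≤ γ₂ ^ (j+1) * (n.choose (j+1) : ℝ) * g ^ (n - j) * M := by positivity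
        have hgoal : ε (n+1) (j+1) ≤ γ₂ ^ (j+1) * ((n.choose (j+1) : ℝ) + (n.choose j : ℝ))
            * g ^ (n - j) * M := by
          calc ε (n+1) (j+1) ≤ γ₁ * ε n (j+1) + γ₂ * ε n j := h1
            _ ≤ γ₂ ^ (j+1) * (n.choose (j+1) : ℝ) * g ^ (n - j) * M
                + γ₂ ^ (j+1) * (n.choose j : ℝ) * g ^ (n - j) * M := add_le_add hterm1 hterm2
            _ = γ₂ ^ (j+1) * ((n.choose (j+1) : ℝ) + (n.choose j : ℝ)) * g ^ (n - j) * M := by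
                ring
        have hcs : ((n+1).choose (j+1) : ℝ) = (n.choose (j+1) : ℝ) + (n.choose j : ℝ) := by
          rw [Nat.choose_succ_succ']
          push_cast
          ring
        rw [Nat.succ_sub_succ, hcs]
        exact hgoal
  -- now bound the pieces
  have hbase := key n hn k
  have hEnn : (0:ℝ) ≤ Real.exp (-α * δT) := Real.exp_nonneg _
  have hApos : (0:ℝ) < 2 + L * Real.exp L := by
    nlinarith [Real.exp_pos L, mul_pos hL (Real.exp_pos L)]
  have hAnn : (0:ℝ) ≤ (2 + L * Real.exp L) * L := (mul_pos hApos hL).le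
  have hγ2le : γ₂ ≤ Real.exp (-α * δT) * ((2 + L * Real.exp L) * L * δT) := by
    have h2 : Real.exp (L * δT) ≤ Real.exp L := Real.exp_le_exp.mpr (by nlinarith)
    have h3 : δT * Real.exp (L * δT) ≤ Real.exp L := by
      nlinarith [Real.exp_pos (L * δT), h2]
    have h4 : L * δT * Real.exp (L * δT) ≤ L * Real.exp L := by
      have := mul_le_mul_of_nonneg_left h3 hL.le
      nlinarith [this]
    calc γ₂ = (2 + L * δT * Real.exp (L * δT)) * (L * δT * Real.exp (-α * δT)) := by
          rw [hγ2]; ring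
      _ ≤ (2 + L * Real.exp L) * (L * δT * Real.exp (-α * δT)) := by
          apply mul_le_mul_of_nonneg_right (by linarith)
          positivity
      _ = Real.exp (-α * δT) * ((2 + L * Real.exp L) * L * δT) := by ring
  have hchoose : ((n.choose k : ℕ) : ℝ) ≤ (N:ℝ)^k / (Nat.factorial k : ℝ) := by
    calc ((n.choose k : ℕ) : ℝ) ≤ ((N.choose k : ℕ) : ℝ) := by
          exact_mod_cast Nat.choose_le_choose k hn
      _ ≤ (N:ℝ)^k / (Nat.factorial k : ℝ) := Nat.choose_le_pow_div k N
  have hG1 : (1:ℝ) ≤ max (Real.exp ((L - α) * ((N : ℝ) * δT))) 1 := le_max_right _ _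
  have hG0 : (0:ℝ) ≤ max (Real.exp ((L - α) * ((N : ℝ) * δT))) 1 := le_trans zero_le_one hG1
  have hh1 : (1:ℝ) ≤ max (Real.exp ((L - α) * δT)) 1 := le_max_right _ _
  have hγ1le : γ₁ ≤ Real.exp ((L - α) * δT) := by
    have h1 : 1 + L * δT ≤ Real.exp (L * δT) := by linarith [Real.add_one_le_exp (L * δT)]
    calc γ₁ ≤ Real.exp (L * δT) * Real.exp (-α * δT) := by
          rw [hγ1]
          exact mul_le_mul_of_nonneg_right h1 (Real.exp_nonneg _)
      _ = Real.exp ((L - α) * δT) := by rw [← Real.exp_add]; ring_nf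
  have hgh : g ≤ max (Real.exp ((L - α) * δT)) 1 := max_le_max hγ1le le_rfl
  have hgpow : g ^ (n - k) ≤ max (Real.exp ((L - α) * ((N : ℝ) * δT))) 1 := by
    calc g ^ (n-k) ≤ (max (Real.exp ((L - α) * δT)) 1) ^ (n-k) :=
          pow_le_pow_left₀ hg0 hgh _
      _ ≤ (max (Real.exp ((L - α) * δT)) 1) ^ N := pow_le_pow_right₀ hh1 (by omega)
      _ ≤ max (Real.exp ((L - α) * ((N : ℝ) * δT))) 1 := by
        rcases le_or_gt 0 (L - α) with hla | hla
        · have hexp1 : (1:ℝ) ≤ Real.exp ((L - α) * δT) := by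
            rw [Real.one_le_exp_iff]
            exact mul_nonneg hla hδT0.le
          rw [max_eq_left hexp1, ← Real.exp_nat_mul]
          have heq : (N:ℝ) * ((L - α) * δT) = (L - α) * ((N:ℝ) * δT) := by ring
          rw [heq]
          exact le_max_left _ _
        · have hexp1 : Real.exp ((L - α) * δT) ≤ 1 := by
            rw [Real.exp_le_one_iff]
            nlinarith
          rw [max_eq_right hexp1, one_pow]
          exact hG1
  have hchain : γ₂ ^ k * (n.choose k : ℝ) * g ^ (n - k) * M
      ≤ (Real.exp (-α * δT) * ((2 + L * Real.exp L) * L * δT)) ^ k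
          * ((N:ℝ)^k / (Nat.factorial k : ℝ))
          * max (Real.exp ((L - α) * ((N : ℝ) * δT))) 1 * M := by
    have p1 : γ₂ ^ k ≤ (Real.exp (-α * δT) * ((2 + L * Real.exp L) * L * δT)) ^ k :=
      pow_le_pow_left₀ hγ2nn hγ2le _
    have nn2 : (0:ℝ) ≤ (Real.exp (-α * δT) * ((2 + L * Real.exp L) * L * δT)) ^ k := by
      positivity
    have s1 : γ₂ ^ k * (n.choose k : ℝ)
        ≤ (Real.exp (-α * δT) * ((2 + L * Real.exp L) * L * δT)) ^ k
            * ((N:ℝ)^k / (Nat.factorial k : ℝ)) :=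
      mul_le_mul p1 hchoose (Nat.cast_nonneg _) nn2
    have s2 : γ₂ ^ k * (n.choose k : ℝ) * g ^ (n-k)
        ≤ (Real.exp (-α * δT) * ((2 + L * Real.exp L) * L * δT)) ^ k
            * ((N:ℝ)^k / (Nat.factorial k : ℝ))
            * max (Real.exp ((L - α) * ((N : ℝ) * δT))) 1 :=
      mul_le_mul s1 hgpow (by positivity) (by positivity)
    exact mul_le_mul_of_nonneg_right s2 hM0
  calc ε n k ≤ γ₂ ^ k * (n.choose k : ℝ) * g ^ (n - k) * M := hbase
    _ ≤ (Real.exp (-α * δT) * ((2 + L * Real.exp L) * L * δT)) ^ k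
          * ((N:ℝ)^k / (Nat.factorial k : ℝ))
          * max (Real.exp ((L - α) * ((N : ℝ) * δT))) 1 * M := hchain
    _ = (Real.exp (-α * δT))^k
          * (((2 + L * Real.exp L) * L * ((N : ℝ) * δT))^k / (Nat.factorial k))
          * max (Real.exp ((L - α) * ((N : ℝ) * δT))) 1 * M := by
        simp only [mul_pow]
        ring
end

section
/- Let α ≥ 0, L ≥ 0, δT > 0, J ∈ ℕ with J ≥ 1, δt := δT/J, and a ≥ 0. Suppose nonnegative reals G₀, G₁, …, G_J satisfy G_j² ≤ 2 e^{-2αδT} a + 2 δT δt L² ∑_{l=1}^{j} e^{-2α l δt} G_{j−l}² for every j = 0, 1, …, J. Then for every j = 0, 1, …, J, G_j² ≤ 2 e^{2 L² δT²} e^{-2αδT} a. -/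
/-- Discrete Gronwall estimate for the fine (exponential Euler) propagator on one
coarse interval of the fully discrete parareal scheme. -/
theorem stmt_16 (α L δT : ℝ) (hα : 0 ≤ α) (hL : 0 ≤ L) (hδT : 0 < δT)
    (J : ℕ) (hJ : 1 ≤ J) (a : ℝ) (ha : 0 ≤ a)
    (G : ℕ → ℝ) (hGpos : ∀ j, 0 ≤ G j)
    (hrec : ∀ j ≤ J, G j ^ 2 ≤ 2 * Real.exp (-2*α*δT) * a
      + 2 * δT * (δT / (J : ℝ)) * L^2 *
        ∑ l ∈ Finset.Icc 1 j, Real.exp (-2*α*(l : ℝ)*(δT / (J : ℝ))) * G (j - l) ^ 2) :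
    ∀ j ≤ J, G j ^ 2 ≤ 2 * Real.exp (2 * L^2 * δT^2) * Real.exp (-2*α*δT) * a := by
  have hJR : (0:ℝ) < (J:ℝ) := by exact_mod_cast Nat.lt_of_lt_of_le Nat.zero_lt_one hJ
  set δt : ℝ := δT / (J:ℝ) with hδt
  have hδt0 : 0 ≤ δt := le_of_lt (div_pos hδT hJR)
  set A : ℝ := 2 * Real.exp (-2*α*δT) * a with hA
  have hA0 : 0 ≤ A := by positivity
  set c : ℝ := 2 * δT * δt * L^2 with hc
  have hc0 : 0 ≤ c := by positivity
  have hcJ : c * (J:ℝ) = 2 * L^2 * δT^2 := by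
    rw [hc, hδt]; field_simp
  have key : ∀ j ≤ J, G j ^ 2 ≤ A * (1+c)^j := by
    intro j
    induction j using Nat.strong_induction_on with
    | _ j ih =>
      intro hjJ
      have h1 := hrec j hjJ
      have hsum : ∑ l ∈ Finset.Icc 1 j, Real.exp (-2*α*(l:ℝ)*δt) * G (j-l)^2
          ≤ ∑ l ∈ Finset.Icc 1 j, A * (1+c)^(j-l) := by
        apply Finset.sum_le_sum
        intro l hl
        obtain ⟨hl1, hlj⟩ := Finset.mem_Icc.mp hl
        have hexp : Real.exp (-2*α*(l:ℝ)*δt) ≤ 1 := by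
          rw [Real.exp_le_one_iff]
          have h : (0:ℝ) ≤ 2*α*(l:ℝ)*δt := by positivity
          linarith
        calc Real.exp (-2*α*(l:ℝ)*δt) * G (j-l)^2
            ≤ 1 * G (j-l)^2 := by
              apply mul_le_mul_of_nonneg_right hexp (by positivity)
          _ = G (j-l)^2 := one_mul _
          _ ≤ A * (1+c)^(j-l) := ih (j-l) (by omega) (by omega)
      have hre : ∑ l ∈ Finset.Icc 1 j, A * (1+c)^(j-l)
          = A * ∑ i ∈ Finset.range j, (1+c)^i := by
        rw [← Finset.Ico_add_one_right_eq_Icc, Finset.sum_Ico_eq_sum_range, Finset.mul_sum]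
        simp only [Nat.add_sub_cancel, Nat.succ_sub_one]
        rw [← Finset.sum_range_reflect]
        apply Finset.sum_congr rfl
        intro i hi
        have hi' := Finset.mem_range.mp hi
        congr 2
        omega
      have hgeom : (∑ i ∈ Finset.range j, (1+c)^i) * c = (1+c)^j - 1 := by
        have := geom_sum_mul (1+c) j
        simpa using this
      have hS0 : 0 ≤ ∑ i ∈ Finset.range j, (1+c)^i := by
        apply Finset.sum_nonneg; intro i _; positivity
      calc G j ^ 2 ≤ A + c * ∑ l ∈ Finset.Icc 1 j, Real.exp (-2*α*(l:ℝ)*δt) * G (j-l)^2 := h1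
        _ ≤ A + c * ∑ l ∈ Finset.Icc 1 j, A * (1+c)^(j-l) := by
            have := mul_le_mul_of_nonneg_left hsum hc0
            linarith
        _ = A + A * ((∑ i ∈ Finset.range j, (1+c)^i) * c) := by rw [hre]; ring
        _ = A * (1+c)^j := by rw [hgeom]; ring
  intro j hjJ
  have h1 := key j hjJ
  have h2 : (1+c)^j ≤ Real.exp (2 * L^2 * δT^2) := by
    calc (1+c)^j ≤ (Real.exp c)^j := by
          apply pow_le_pow_left₀ (by linarith) (by linarith [Real.add_one_le_exp c])
      _ = Real.exp (c * j) := by rw [← Real.exp_nat_mul]; ring_nf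
      _ ≤ Real.exp (c * J) := by
          apply Real.exp_le_exp.mpr
          apply mul_le_mul_of_nonneg_left _ hc0
          exact_mod_cast hjJ
      _ = Real.exp (2 * L^2 * δT^2) := by rw [hcJ]
  calc G j ^ 2 ≤ A * (1+c)^j := h1
    _ ≤ A * Real.exp (2 * L^2 * δT^2) := mul_le_mul_of_nonneg_left h2 hA0
    _ = 2 * Real.exp (2 * L^2 * δT^2) * Real.exp (-2*α*δT) * a := by rw [hA]; ring
end

section
/- Let n ≥ 2, β ∈ [0,1), and let M(β) be the n × n real matrix with entries M(β)_{ij} = β^{i−j−1} if i > j and M(β)_{ij} = 0 if i ≤ j (indices 1 ≤ i,j ≤ n). Then for every k ≥ 1, the maximum-row-sum operator norm satisfies ‖M(β)^k‖_∞ ≤ min{ ((1 − β^{n−1})/(1 − β))^k , binom(n−1, k) }. -/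
lemma hockey_stick (k : ℕ) : ∀ i : ℕ, ∑ t ∈ Finset.range i, t.choose k = i.choose (k+1) := by
  intro i
  induction i with
  | zero => simp
  | succ i ih => rw [Finset.sum_range_succ, ih, Nat.choose_succ_succ, Nat.add_comm]

/-- Norm bound for powers of the lower-triangular Toeplitz parareal iteration
matrix: the maximum absolute row sum of M(β)^k is at most
min{((1−β^{n−1})/(1−β))^k, binom(n−1,k)} for β ∈ [0,1). -/
theorem stmt_18 (n : ℕ) (hn : 2 ≤ n) (β : ℝ) (hβ0 : 0 ≤ β) (hβ1 : β < 1)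
    (M : Matrix (Fin n) (Fin n) ℝ)
    (hM : ∀ i j : Fin n, M i j = if (j : ℕ) < (i : ℕ) then β ^ ((i : ℕ) - (j : ℕ) - 1) else 0) :
    ∀ k : ℕ, 1 ≤ k → ∀ i : Fin n,
      ∑ j, |(M ^ k) i j| ≤
        min (((1 - β^(n-1)) / (1 - β))^k) ((n-1).choose k : ℝ) := by
  set S : ℝ := (1 - β^(n-1)) / (1 - β) with hSdef
  have h1β : (1:ℝ) - β ≠ 0 := by linarith
  have hgeom : ∑ t ∈ Finset.range (n-1), β^t = S := by
    have hβ1' : β - 1 ≠ 0 := by linarith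
    rw [geom_sum_eq (ne_of_lt hβ1) (n-1), hSdef, div_eq_div_iff hβ1' (by linarith : (1:ℝ) - β ≠ 0)]
    ring
  have hS0 : 0 ≤ S := by
    rw [← hgeom]
    exact Finset.sum_nonneg fun t _ => pow_nonneg hβ0 t
  have hMnn : ∀ i j : Fin n, 0 ≤ M i j := by
    intro i j
    rw [hM]
    split
    · exact pow_nonneg hβ0 _
    · exact le_refl 0
  have hnn : ∀ k : ℕ, ∀ i j : Fin n, 0 ≤ (M ^ k) i j := by
    intro k
    induction k with
    | zero =>
      intro i j
      rw [pow_zero, Matrix.one_apply]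
      split <;> norm_num
    | succ k ih =>
      intro i j
      rw [pow_succ, Matrix.mul_apply]
      exact Finset.sum_nonneg fun l _ => mul_nonneg (ih i l) (hMnn l j)
  -- split of power into M * M^k at the level of row sums
  have hsplit : ∀ (k : ℕ) (i : Fin n),
      ∑ j, (M ^ (k+1)) i j = ∑ l, M i l * ∑ j, (M ^ k) l j := by
    intro k i
    simp only [pow_succ', Matrix.mul_apply]
    rw [Finset.sum_comm]
    exact Finset.sum_congr rfl fun l _ => (Finset.mul_sum _ _ _).symm
  -- row sums of M are ≤ S
  have hrowM : ∀ i : Fin n, ∑ j, M i j ≤ S := by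
    intro i
    have e1 : ∑ j, M i j
        = ∑ j ∈ Finset.range n, (if j < (i:ℕ) then β ^ ((i:ℕ) - j - 1) else 0) := by
      rw [← Fin.sum_univ_eq_sum_range (fun j => if j < (i:ℕ) then β ^ ((i:ℕ) - j - 1) else 0) n]
      exact Finset.sum_congr rfl fun j _ => hM i j
    have e2 : ∑ j ∈ Finset.range n, (if j < (i:ℕ) then β ^ ((i:ℕ) - j - 1) else 0)
        = ∑ j ∈ Finset.range (i:ℕ), β ^ ((i:ℕ) - j - 1) := by
      rw [← Finset.sum_subset (Finset.range_subset_range.mpr i.isLt.le)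
        (fun x _ hx => by simp only [Finset.mem_range] at hx; simp [hx])]
      exact Finset.sum_congr rfl fun j hj => by
        simp only [Finset.mem_range] at hj; simp [hj]
    have e3 : ∑ j ∈ Finset.range (i:ℕ), β ^ ((i:ℕ) - j - 1)
        = ∑ t ∈ Finset.range (i:ℕ), β ^ t := by
      rw [← Finset.sum_range_reflect (fun t => β ^ t) (i:ℕ)]
      exact Finset.sum_congr rfl fun j _ => by rw [Nat.sub_right_comm]
    rw [e1, e2, e3, ← hgeom]
    exact Finset.sum_le_sum_of_subset_of_nonneg
      (Finset.range_subset_range.mpr (by omega : (i:ℕ) ≤ n - 1))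
      (fun t _ _ => pow_nonneg hβ0 t)
  -- bound A: row sums of M^k are ≤ S^k
  have hA : ∀ k : ℕ, ∀ i : Fin n, ∑ j, (M ^ k) i j ≤ S ^ k := by
    intro k
    induction k with
    | zero =>
      intro i
      simp [Matrix.one_apply]
    | succ k ih =>
      intro i
      rw [hsplit k i]
      calc ∑ l, M i l * ∑ j, (M ^ k) l j
          ≤ ∑ l, M i l * S ^ k :=
            Finset.sum_le_sum fun l _ => mul_le_mul_of_nonneg_left (ih l) (hMnn i l)
        _ = (∑ l, M i l) * S ^ k := (Finset.sum_mul _ _ _).symm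
        _ ≤ S * S ^ k :=
            mul_le_mul_of_nonneg_right (hrowM i) (pow_nonneg hS0 k)
        _ = S ^ (k+1) := (pow_succ' S k).symm
  -- bound B: row sums of M^k are ≤ choose i k
  have hB : ∀ k : ℕ, ∀ i : Fin n, ∑ j, (M ^ k) i j ≤ ((i:ℕ).choose k : ℝ) := by
    intro k
    induction k with
    | zero =>
      intro i
      simp [Matrix.one_apply]
    | succ k ih =>
      intro i
      rw [hsplit k i]
      have step1 : ∑ l, M i l * ∑ j, (M ^ k) l j
          ≤ ∑ l : Fin n, (if (l:ℕ) < (i:ℕ) then ((l:ℕ).choose k : ℝ) else 0) := by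
        apply Finset.sum_le_sum
        intro l _
        have h1 : M i l * ∑ j, (M ^ k) l j ≤ M i l * ((l:ℕ).choose k : ℝ) :=
          mul_le_mul_of_nonneg_left (ih l) (hMnn i l)
        refine h1.trans ?_
        rw [hM]
        split
        · have : β ^ ((i:ℕ) - (l:ℕ) - 1) ≤ 1 := pow_le_one₀ hβ0 hβ1.le
          calc β ^ ((i:ℕ) - (l:ℕ) - 1) * ((l:ℕ).choose k : ℝ)
              ≤ 1 * ((l:ℕ).choose k : ℝ) :=
                mul_le_mul_of_nonneg_right this (Nat.cast_nonneg _)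
            _ = ((l:ℕ).choose k : ℝ) := one_mul _
        · simp
      have step2 : ∑ l : Fin n, (if (l:ℕ) < (i:ℕ) then ((l:ℕ).choose k : ℝ) else 0)
          = ((i:ℕ).choose (k+1) : ℝ) := by
        rw [Fin.sum_univ_eq_sum_range (fun t => if t < (i:ℕ) then ((t).choose k : ℝ) else 0) n]
        rw [← Finset.sum_subset (Finset.range_subset_range.mpr i.isLt.le)
          (fun x _ hx => by simp only [Finset.mem_range] at hx; simp [hx])]
        have e : ∑ j ∈ Finset.range (i:ℕ), (if j < (i:ℕ) then ((j).choose k : ℝ) else 0)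
            = ∑ j ∈ Finset.range (i:ℕ), ((j).choose k : ℝ) :=
          Finset.sum_congr rfl fun j hj => by
            simp only [Finset.mem_range] at hj
            simp [hj]
        rw [e, ← Nat.cast_sum, hockey_stick k (i:ℕ)]
      rw [step2] at step1
      exact step1
  intro k hk i
  have habs : ∑ j, |(M ^ k) i j| = ∑ j, (M ^ k) i j :=
    Finset.sum_congr rfl fun j _ => abs_of_nonneg (hnn k i j)
  rw [habs]
  apply le_min
  · exact hA k i
  · refine (hB k i).trans ?_
    exact_mod_cast Nat.cast_le.mpr (Nat.choose_le_choose k (by omega : (i:ℕ) ≤ n - 1))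
end

section
/- Let θ ∈ [0,1], λ ∈ ℝ and α > √(max(1/2 − θ, 0)) · |λ|. Then there exists C > 0 (depending on θ, λ, α) such that for all δT ∈ (0,1] and all k ≥ 0 the following holds: with η := (1 + i(1−θ)λδT)/(1 − iθλδT) and any s ∈ ℂ with |s| = e^{-αδT}, if (ε_n^{(k)})_{n≥0,k≥0} are complex numbers with ε_0^{(k)} = 0 for all k, ε_n^{(k)} = η s ε_{n−1}^{(k)} + (e^{iλδT} − η) s ε_{n−1}^{(k−1)} for n,k ≥ 1, and E := sup_n |ε_n^{(0)}| < ∞, then sup_{n≥0} |ε_n^{(k)}| ≤ ( C(|2θ−1| δT + δT²) )^k · E. -/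
lemma aux_one_add_sq_le (v : ℝ) (hv : 0 ≤ v) : 1 + v^2 ≤ Real.exp (Real.sqrt 2 * v) := by
  have h := Real.quadratic_le_exp_of_nonneg (mul_nonneg (Real.sqrt_nonneg 2) hv)
  have h2 : Real.sqrt 2 ^ 2 = 2 := Real.sq_sqrt (by norm_num)
  nlinarith [mul_nonneg (Real.sqrt_nonneg 2) hv]

lemma eta_abs_le (θ lam t : ℝ) (h0 : 0 ≤ θ) (h1 : θ ≤ 1) (ht : 0 ≤ t) :
    ‖(1 + Complex.I * ((1 - θ) * lam * t)) / (1 - Complex.I * (θ * lam * t))‖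
      ≤ Real.exp (Real.sqrt (max (1/2 - θ) 0) * |lam| * t) := by
  set a : ℝ := (1 - θ) * lam * t with ha
  set b : ℝ := θ * lam * t with hb
  set e : ℝ := Real.exp (Real.sqrt (max (1/2 - θ) 0) * |lam| * t) with he
  have e1 : (1 + Complex.I * ((1 - θ) * lam * t) : ℂ) = Complex.ofReal 1 + Complex.ofReal a * Complex.I := by
    push_cast [ha]; ring
  have e2 : (1 - Complex.I * (θ * lam * t) : ℂ) = Complex.ofReal 1 + Complex.ofReal (-b) * Complex.I := by
    push_cast [hb]; ring
  rw [norm_div, e1, e2, Complex.norm_add_mul_I, Complex.norm_add_mul_I]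
  have hbpos : (0:ℝ) < Real.sqrt ((1:ℝ)^2 + (-b)^2) := Real.sqrt_pos.mpr (by positivity)
  rw [div_le_iff₀ hbpos]
  have key : (1:ℝ)^2 + a^2 ≤ e^2 * ((1:ℝ)^2 + (-b)^2) := by
    have he2 : e^2 = Real.exp (2 * (Real.sqrt (max (1/2 - θ) 0) * |lam| * t)) := by
      rw [sq, ← Real.exp_add]; ring_nf
    rcases le_or_gt (1/2 : ℝ) θ with hc | hc
    · have hm : max (1/2 - θ) 0 = 0 := max_eq_right (by linarith)
      have : e = 1 := by rw [he, hm]; simp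
      have hab : a^2 ≤ b^2 := by
        have : (1 - θ)^2 ≤ θ^2 := by nlinarith
        rw [ha, hb]; nlinarith [sq_nonneg (lam * t)]
      rw [this]; nlinarith
    · have hm : max (1/2 - θ) 0 = 1/2 - θ := max_eq_left (by linarith)
      set m : ℝ := 1/2 - θ with hmdef
      have hmpos : 0 < m := by rw [hmdef]; linarith
      set v : ℝ := Real.sqrt (2*m) * |lam| * t with hv
      have hv0 : 0 ≤ v := by positivity
      have hvsq : v^2 = 2 * m * lam^2 * t^2 := by
        rw [hv, mul_pow, mul_pow, Real.sq_sqrt (by linarith), sq_abs]; try ring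
      have haux := aux_one_add_sq_le v hv0
      have hsq2 : Real.sqrt 2 * v = 2 * (Real.sqrt m * |lam| * t) := by
        have h22 : Real.sqrt 2 * Real.sqrt 2 = 2 := Real.mul_self_sqrt (by norm_num)
        rw [hv, Real.sqrt_mul (by norm_num : (0:ℝ) ≤ 2) m]
        linear_combination (Real.sqrt m * |lam| * t) * h22
      have he2' : e^2 = Real.exp (Real.sqrt 2 * v) := by rw [he2, hm, hsq2]
      have hab : a^2 = b^2 + 2*m*lam^2*t^2 := by rw [ha, hb, hmdef]; ring
      have hb2 : 0 ≤ b^2 := sq_nonneg b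
      rw [he2']
      have hp := mul_le_mul_of_nonneg_right haux (by positivity : (0:ℝ) ≤ (1:ℝ)^2 + (-b)^2)
      nlinarith [hp, mul_nonneg (mul_nonneg (mul_nonneg (by linarith : (0:ℝ) ≤ 2*m) (sq_nonneg lam)) (sq_nonneg t)) hb2]
  calc Real.sqrt (1^2 + a^2) ≤ Real.sqrt (e^2 * (1^2 + (-b)^2)) := Real.sqrt_le_sqrt key
    _ = e * Real.sqrt (1^2 + (-b)^2) := by
        rw [Real.sqrt_mul (sq_nonneg e), Real.sqrt_sq (Real.exp_nonneg _)]


lemma tri_sub (X Y : ℂ) : ‖X - Y‖ ≤ ‖X‖ + ‖Y‖ := by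
  have h := norm_add_le X (-Y)
  rwa [← sub_eq_add_neg, norm_neg] at h

set_option maxHeartbeats 1000000 in
lemma d_abs_le (θ lam t : ℝ) (h0 : 0 ≤ θ) (h1 : θ ≤ 1) (ht0 : 0 < t) (ht1 : t ≤ 1) :
    ‖Complex.exp (Complex.I * (lam * t))
        - (1 + Complex.I * ((1 - θ) * lam * t)) / (1 - Complex.I * (θ * lam * t))‖
      ≤ |2*θ - 1| * (lam^2/2) * t^2 + (3 + |lam|) * |lam|^3 * t^3 := by
  set z : ℂ := Complex.I * (lam * t) with hz
  set num : ℂ := 1 + Complex.I * ((1 - θ) * lam * t) with hnum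
  set den : ℂ := 1 - Complex.I * (θ * lam * t) with hden
  set X : ℝ := |lam| * t with hX
  have hX0 : 0 ≤ X := by positivity
  have hX2 : X^2 = lam^2 * t^2 := by rw [hX, mul_pow, sq_abs]
  have hX3 : X^3 = |lam|^3 * t^3 := by rw [hX, mul_pow]
  have habs_z : ‖z‖ = X := by
    rw [hz, norm_mul, Complex.norm_I, one_mul,
      show ((lam:ℂ) * t) = ((lam*t : ℝ) : ℂ) by push_cast; ring, Complex.norm_real, Real.norm_eq_abs,
      abs_mul, abs_of_pos ht0, hX]
  have hden_abs : 1 ≤ ‖den‖ := by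
    have e2 : den = Complex.ofReal 1 + Complex.ofReal (-(θ*lam*t)) * Complex.I := by
      rw [hden]; push_cast; ring
    rw [e2, Complex.norm_add_mul_I]
    calc (1:ℝ) = Real.sqrt 1 := Real.sqrt_one.symm
      _ ≤ _ := Real.sqrt_le_sqrt (by nlinarith [sq_nonneg (θ*lam*t)])
  have hden_ne : den ≠ 0 := by
    intro h; rw [h] at hden_abs; simp at hden_abs; linarith
  have hnum_abs : ‖num‖ ≤ 1 + X := by
    rw [hnum]
    refine (norm_add_le _ _).trans ?_
    rw [norm_one, norm_mul, Complex.norm_I, one_mul,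
      show ((1:ℂ) - θ) * lam * t = (((1-θ)*lam*t : ℝ) : ℂ) by push_cast; ring,
      Complex.norm_real, Real.norm_eq_abs]
    have : |(1-θ)*lam*t| ≤ X := by
      rw [abs_mul, abs_mul, abs_of_pos ht0, abs_of_nonneg (by linarith : (0:ℝ) ≤ 1 - θ), hX]
      nlinarith [abs_nonneg lam, mul_nonneg (abs_nonneg lam) ht0.le]
    linarith
  have hexp_abs : ‖Complex.exp z‖ = 1 := by
    rw [Complex.norm_exp, show z.re = 0 by rw [hz]; simp, Real.exp_zero]
  have hsplit : Complex.exp z - num / den = (Complex.exp z * den - num) / den := by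
    field_simp
  have h2θ : |2*θ - 1| = 2 * |1/2 - θ| := by
    rw [show (2*θ - 1 : ℝ) = -(2*(1/2 - θ)) by ring, abs_neg, abs_mul, abs_two]
  rcases le_or_gt X 1 with hx | hx
  · -- Taylor case
    have hz1 : ‖z‖ ≤ 1 := by rw [habs_z]; exact hx
    set R₂ : ℂ := Complex.exp z - (1 + z) with hR2
    set R₃ : ℂ := Complex.exp z - (1 + z + z^2/2) with hR3
    have hsum2 : ∑ m ∈ Finset.range 2, z^m / (Nat.factorial m : ℂ) = 1 + z := by
      rw [Finset.sum_range_succ, Finset.sum_range_one]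
      norm_num [Nat.factorial]
    have hsum3 : ∑ m ∈ Finset.range 3, z^m / (Nat.factorial m : ℂ) = 1 + z + z^2/2 := by
      rw [Finset.sum_range_succ, Finset.sum_range_succ, Finset.sum_range_one]
      norm_num [Nat.factorial]
    have hR2b : ‖R₂‖ ≤ (3/4) * X^2 := by
      have hb := Complex.exp_bound (x := z) hz1 (n := 2) (by norm_num)
      rw [hsum2] at hb
      rw [hR2]
      refine hb.trans ?_
      rw [habs_z]
      norm_num [Nat.factorial]
      linarith [sq_nonneg X]
    have hR3b : ‖R₃‖ ≤ (2/9) * X^3 := by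
      have hb := Complex.exp_bound (x := z) hz1 (n := 3) (by norm_num)
      rw [hsum3] at hb
      rw [hR3]
      refine hb.trans ?_
      rw [habs_z]
      norm_num [Nat.factorial]
      nlinarith [pow_nonneg hX0 3]
    have hNid : Complex.exp z * den - num
        = ((1:ℂ)/2 - (θ:ℝ)) * z^2 + R₃ - (θ:ℝ) * z * R₂ := by
      rw [hR3, hR2, hden, hnum, hz]; push_cast; ring
    have hA : ‖((1:ℂ)/2 - (θ:ℝ)) * z^2‖ = |1/2 - θ| * X^2 := by
      rw [norm_mul, norm_pow, habs_z,
        show ((1:ℂ)/2 - (θ:ℝ)) = ((1/2 - θ : ℝ) : ℂ) by push_cast; ring,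
        Complex.norm_real, Real.norm_eq_abs]
    have hB : ‖(θ:ℝ) * z * R₂‖ ≤ θ * X * ((3/4) * X^2) := by
      rw [norm_mul, norm_mul, Complex.norm_real, Real.norm_eq_abs, abs_of_nonneg h0, habs_z]
      exact mul_le_mul_of_nonneg_left hR2b (by positivity)
    have htri : ‖Complex.exp z * den - num‖
        ≤ |1/2 - θ| * X^2 + (2/9) * X^3 + θ * X * ((3/4) * X^2) := by
      rw [hNid]
      refine (tri_sub _ _).trans ?_
      have := (norm_add_le (((1:ℂ)/2 - (θ:ℝ)) * z^2) R₃)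
      rw [hA] at this
      linarith [hR3b, hB, this]
    calc ‖Complex.exp z - num / den‖
        = ‖Complex.exp z * den - num‖ / ‖den‖ := by
          rw [hsplit, norm_div]
      _ ≤ ‖Complex.exp z * den - num‖ :=
          div_le_self (norm_nonneg _) hden_abs
      _ ≤ |1/2 - θ| * X^2 + (2/9) * X^3 + θ * X * ((3/4) * X^2) := htri
      _ ≤ |2*θ - 1| * (lam^2/2) * t^2 + (3 + |lam|) * |lam|^3 * t^3 := by
          have e2' : 2 * |1/2 - θ| * (lam^2/2) * t^2 = |1/2 - θ| * X^2 := by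
            rw [hX2]; ring
          have e3 : (3 + |lam|) * |lam|^3 * t^3 = (3 + |lam|) * X^3 := by
            linear_combination (3 + |lam|) * hX3
          have hcube : X * X^2 = X^3 := by ring
          have key : (2/9) * X^3 + θ * X * ((3/4) * X^2) ≤ (3 + |lam|) * X^3 := by
            nlinarith [pow_nonneg hX0 3, abs_nonneg lam,
              mul_nonneg (abs_nonneg lam) (pow_nonneg hX0 3)]
          rw [h2θ]
          linarith [key, e2', e3]
  · -- large X case
    have hX3one : 1 ≤ X^3 := by nlinarith
    have hXlam : X ≤ |lam| := by
      rw [hX]; nlinarith [abs_nonneg lam]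
    calc ‖Complex.exp z - num / den‖
        ≤ ‖Complex.exp z‖ + ‖num / den‖ := tri_sub _ _
      _ ≤ 1 + ‖num‖ := by
          rw [hexp_abs, norm_div]
          exact add_le_add le_rfl (div_le_self (norm_nonneg num) hden_abs)
      _ ≤ 2 + X := by linarith [hnum_abs]
      _ ≤ |2*θ - 1| * (lam^2/2) * t^2 + (3 + |lam|) * |lam|^3 * t^3 := by
          have e3 : (3 + |lam|) * |lam|^3 * t^3 = (3 + |lam|) * X^3 := by
            linear_combination (3 + |lam|) * hX3
          have h5 : 3 + |lam| ≤ (3 + |lam|) * X^3 :=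
            le_mul_of_one_le_right (by linarith [abs_nonneg lam]) hX3one
          have h6 : 0 ≤ |2*θ - 1| * (lam^2/2) * t^2 :=
            mul_nonneg (mul_nonneg (abs_nonneg _) (by nlinarith [sq_nonneg lam])) (sq_nonneg t)
          linarith


lemma exp_convex_bound (β t : ℝ) (ht0 : 0 ≤ t) (ht1 : t ≤ 1) :
    Real.exp (-(β*t)) ≤ 1 - (1 - Real.exp (-β)) * t := by
  have h := convexOn_exp.2 (Set.mem_univ (0:ℝ)) (Set.mem_univ (-β))
    (by linarith : (0:ℝ) ≤ 1 - t) ht0 (by ring)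
  simp only [smul_eq_mul, mul_zero, zero_add, Real.exp_zero, mul_one] at h
  calc Real.exp (-(β*t)) = Real.exp (t * (-β)) := by ring_nf
    _ ≤ 1 - t + t * Real.exp (-β) := h
    _ = 1 - (1 - Real.exp (-β)) * t := by ring

/-- Main single-mode convergence theorem for the parareal exponential θ-scheme:
under α > √((1/2−θ)⁺)|λ|, the k-th parareal iterate converges uniformly in time
with rate (C(|2θ−1|δT + δT²))^k. -/
theorem stmt_19 (θ lam α : ℝ) (hθ : θ ∈ Set.Icc (0:ℝ) 1)
    (hα : Real.sqrt (max (1/2 - θ) 0) * |lam| < α) :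
    ∃ C > 0, ∀ δT : ℝ, 0 < δT → δT ≤ 1 → ∀ k : ℕ,
      ∀ s : ℂ, ‖s‖ = Real.exp (-α * δT) →
      ∀ ε : ℕ → ℕ → ℂ,
        (∀ k', ε 0 k' = 0) →
        (∀ n k', 1 ≤ n → 1 ≤ k' →
          ε n k' = (1 + Complex.I * ((1 - θ) * lam * δT)) / (1 - Complex.I * (θ * lam * δT))
              * s * ε (n - 1) k'
            + (Complex.exp (Complex.I * (lam * δT))
                - (1 + Complex.I * ((1 - θ) * lam * δT)) / (1 - Complex.I * (θ * lam * δT)))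
              * s * ε (n - 1) (k' - 1)) →
        ∀ E : ℝ, (∀ n, ‖ε n 0‖ ≤ E) →
        ∀ n, ‖ε n k‖ ≤ (C * (|2*θ - 1| * δT + δT^2))^k * E := by
  obtain ⟨hθ0, hθ1⟩ := hθ
  have hβ : 0 < α - Real.sqrt (max (1/2 - θ) 0) * |lam| := by linarith
  set β : ℝ := α - Real.sqrt (max (1/2 - θ) 0) * |lam| with hβdef
  have hα0 : 0 < α :=
    lt_of_le_of_lt (mul_nonneg (Real.sqrt_nonneg _) (abs_nonneg _)) hα
  set K : ℝ := lam^2/2 + (3 + |lam|) * |lam|^3 with hK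
  have hK0 : 0 ≤ K := by
    have h1 : (0:ℝ) ≤ lam^2/2 := by positivity
    have h2 : (0:ℝ) ≤ (3 + |lam|) * |lam|^3 :=
      mul_nonneg (by linarith [abs_nonneg lam]) (by positivity)
    rw [hK]; linarith
  set c : ℝ := 1 - Real.exp (-β) with hc
  have hc0 : 0 < c := by
    have : Real.exp (-β) < Real.exp 0 := Real.exp_lt_exp.mpr (by linarith)
    rw [Real.exp_zero] at this
    simp only [hc]; linarith
  have hC0 : 0 < K / c + 1 := by
    have : 0 ≤ K / c := div_nonneg hK0 hc0.le
    linarith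
  refine ⟨K / c + 1, hC0, ?_⟩
  intro δT ht0 ht1 k s hs ε h0 hrec E hE
  have hE0 : 0 ≤ E := le_trans (norm_nonneg _) (hE 0)
  set A : ℂ := (1 + Complex.I * ((1 - θ) * lam * δT)) / (1 - Complex.I * (θ * lam * δT))
    with hA
  set D : ℂ := Complex.exp (Complex.I * (lam * δT)) - A with hD
  set Δ : ℝ := (K / c + 1) * (|2*θ - 1| * δT + δT^2) with hΔ
  have hΔ0 : 0 ≤ Δ := by
    have h1 : 0 ≤ |2*θ - 1| * δT + δT^2 := by positivity
    exact mul_nonneg hC0.le h1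
  have hs1 : ‖s‖ ≤ 1 := by
    rw [hs]
    calc Real.exp (-α * δT) ≤ Real.exp 0 := Real.exp_le_exp.mpr (by nlinarith)
      _ = 1 := Real.exp_zero
  -- bound on |A||s|
  have hq : ‖A‖ * ‖s‖ ≤ 1 - c * δT := by
    have h1 := eta_abs_le θ lam δT hθ0 hθ1 ht0.le
    have h2 : ‖A‖ * ‖s‖
        ≤ Real.exp (Real.sqrt (max (1/2 - θ) 0) * |lam| * δT) * Real.exp (-α * δT) := by
      rw [hs]
      exact mul_le_mul_of_nonneg_right h1 (Real.exp_nonneg _)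
    have h3 : Real.exp (Real.sqrt (max (1/2 - θ) 0) * |lam| * δT) * Real.exp (-α * δT)
        = Real.exp (-(β * δT)) := by
      rw [← Real.exp_add]; congr 1; rw [hβdef]; ring
    have h4 := exp_convex_bound β δT ht0.le ht1
    rw [h3] at h2
    simp only [← hc] at h4
    linarith
  -- bound on |D||s|
  have hr : ‖D‖ * ‖s‖ ≤ c * δT * Δ := by
    have h1 := d_abs_le θ lam δT hθ0 hθ1 ht0 ht1
    have h2 : ‖D‖ * ‖s‖ ≤ ‖D‖ * 1 :=
      mul_le_mul_of_nonneg_left hs1 (norm_nonneg _)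
    rw [mul_one] at h2
    have h3 : c * δT * Δ = (K + c) * (|2*θ - 1| * δT^2 + δT^3) := by
      rw [hΔ]
      have hcne : c ≠ 0 := ne_of_gt hc0
      field_simp
    have h4 : |2*θ - 1| * (lam^2/2) * δT^2 + (3 + |lam|) * |lam|^3 * δT^3
        ≤ (K + c) * (|2*θ - 1| * δT^2 + δT^3) := by
      rw [hK]
      have n1 : 0 ≤ |2*θ - 1| := abs_nonneg _
      have n2 : (0:ℝ) ≤ (3 + |lam|) * |lam|^3 :=
        mul_nonneg (by linarith [abs_nonneg lam]) (by positivity)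
      have n3 : (0:ℝ) ≤ lam^2/2 := by positivity
      have n4 : (0:ℝ) ≤ δT^2 := sq_nonneg _
      have n5 : (0:ℝ) ≤ δT^3 := by positivity
      nlinarith [mul_nonneg (mul_nonneg n1 n2) n4, mul_nonneg n3 n5,
        mul_nonneg (mul_nonneg n1 hc0.le) n4, mul_nonneg hc0.le n5]
    rw [h3]
    calc ‖D‖ * ‖s‖ ≤ ‖D‖ := h2
      _ ≤ _ := h1.trans h4
  -- scalar contraction inequality
  have hscalar : ‖A‖ * ‖s‖ * Δ + ‖D‖ * ‖s‖ ≤ Δ := by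
    have := mul_le_mul_of_nonneg_right hq hΔ0
    nlinarith
  -- main induction
  induction k with
  | zero =>
    intro n; simpa using hE n
  | succ k ih =>
    intro n
    induction n with
    | zero =>
      rw [h0]
      simp only [norm_zero]
      exact mul_nonneg (pow_nonneg hΔ0 _) hE0
    | succ n ihn =>
      rw [hrec (n+1) (k+1) (Nat.le_add_left 1 n) (Nat.le_add_left 1 k)]
      simp only [Nat.add_sub_cancel]
      calc ‖A * s * ε n (k+1) + D * s * ε n k‖
          ≤ ‖A * s * ε n (k+1)‖ + ‖D * s * ε n k‖ :=
            norm_add_le _ _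
        _ = ‖A‖ * ‖s‖ * ‖ε n (k+1)‖
            + ‖D‖ * ‖s‖ * ‖ε n k‖ := by
            rw [norm_mul, norm_mul, norm_mul, norm_mul]
        _ ≤ ‖A‖ * ‖s‖ * (Δ^(k+1) * E)
            + ‖D‖ * ‖s‖ * (Δ^k * E) := by
            refine add_le_add ?_ ?_
            · exact mul_le_mul_of_nonneg_left ihn
                (mul_nonneg (norm_nonneg _) (norm_nonneg _))
            · exact mul_le_mul_of_nonneg_left (ih n)
                (mul_nonneg (norm_nonneg _) (norm_nonneg _))
        _ = (‖A‖ * ‖s‖ * Δ + ‖D‖ * ‖s‖) * (Δ^k * E) := by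
            rw [pow_succ]; ring
        _ ≤ Δ * (Δ^k * E) :=
            mul_le_mul_of_nonneg_right hscalar (mul_nonneg (pow_nonneg hΔ0 _) hE0)
        _ = Δ^(k+1) * E := by rw [pow_succ]; ring
end
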